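/- arXiv:1805.04585 — 4 statements merged into one kernel-verified Lean document; each statement's English description precedes it below -/
import Mathlib

section
/- Let k be a perfect subfield of ℂ. Then the fixed field of the automorphism group Aut(ℂ/k) acting on ℂ is exactly k. -/
set_option maxHeartbeats 2000000
set_option synthInstance.maxHeartbeats 400000

open MvPolynomial

noncomputable section

/-- Extension lemma: an automorphism of the polynomial ring over the algebraic
closure of `k` in `ℂ` (in variables a transcendence basis of `ℂ`), compatible with
an automorphism `τ` of the algebraic closure, extends to an automorphism of `ℂ` over `k`. -/
lemma ext_aut (k : Subfield ℂ) (s : Set ℂ)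
    (hv : IsTranscendenceBasis (algebraicClosure k ℂ) ((↑) : s → ℂ))
    (e : MvPolynomial s (algebraicClosure k ℂ) ≃+* MvPolynomial s (algebraicClosure k ℂ))
    (τ : algebraicClosure k ℂ ≃ₐ[k] algebraicClosure k ℂ)
    (he : ∀ m, e (MvPolynomial.C m) = MvPolynomial.C (τ m)) :
    ∃ σ : ℂ ≃ₐ[k] ℂ, ∀ p, σ (MvPolynomial.aeval ((↑) : s → ℂ) p)
      = MvPolynomial.aeval ((↑) : s → ℂ) (e p) := by
  haveI : IsAlgClosure (Algebra.adjoin (algebraicClosure k ℂ) (Set.range ((↑) : s → ℂ))) ℂ :=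
    IsAlgClosed.isAlgClosure_of_transcendence_basis _ hv
  haveI : Module.IsTorsionFree (Algebra.adjoin (algebraicClosure k ℂ) (Set.range ((↑) : s → ℂ))) ℂ :=
    Module.isTorsionFree_iff_algebraMap_injective.2 Subtype.val_injective
  let eq1 := hv.1.aevalEquiv
  let eA := (eq1.symm.toRingEquiv.trans e).trans eq1.toRingEquiv
  let σ₀ : ℂ ≃+* ℂ := IsAlgClosure.equivOfEquiv ℂ ℂ eA
  have key : ∀ p, σ₀ (MvPolynomial.aeval ((↑) : s → ℂ) p)
      = MvPolynomial.aeval ((↑) : s → ℂ) (e p) := by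
    intro p
    have h1 : MvPolynomial.aeval ((↑) : s → ℂ) p
        = algebraMap (Algebra.adjoin (algebraicClosure k ℂ) (Set.range ((↑) : s → ℂ))) ℂ
          (eq1 p) :=
      (hv.1.algebraMap_aevalEquiv p).symm
    have h2 : MvPolynomial.aeval ((↑) : s → ℂ) (e p)
        = algebraMap (Algebra.adjoin (algebraicClosure k ℂ) (Set.range ((↑) : s → ℂ))) ℂ
          (eq1 (e p)) :=
      (hv.1.algebraMap_aevalEquiv (e p)).symm
    rw [h1, h2]
    show IsAlgClosure.equivOfEquiv ℂ ℂ eA (algebraMap _ ℂ (eq1 p)) = _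
    rw [IsAlgClosure.equivOfEquiv_algebraMap]
    congr 1
    show eq1 (e (eq1.symm (eq1 p))) = eq1 (e p)
    rw [AlgEquiv.symm_apply_apply]
  have commutes : ∀ c : k, σ₀ (algebraMap k ℂ c) = algebraMap k ℂ c := by
    intro c
    have h0 : algebraMap k ℂ c
        = MvPolynomial.aeval ((↑) : s → ℂ)
          (MvPolynomial.C (algebraMap k (algebraicClosure k ℂ) c)) := by
      rw [MvPolynomial.aeval_C]
      exact IsScalarTower.algebraMap_apply k (algebraicClosure k ℂ) ℂ c
    rw [h0, key, he, MvPolynomial.aeval_C, AlgEquiv.commutes, MvPolynomial.aeval_C]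
  exact ⟨AlgEquiv.ofRingEquiv commutes, key⟩

/-- If `x ∉ k` then some automorphism of `ℂ` over `k` moves `x`. -/
lemma exists_aut (k : Subfield ℂ) (x : ℂ) (hx : x ∉ k) : ∃ σ : ℂ ≃ₐ[k] ℂ, σ x ≠ x := by
  by_cases hxM : x ∈ algebraicClosure k ℂ
  · -- Case 1 : `x` is algebraic over `k`.
    set x' : algebraicClosure k ℂ := ⟨x, hxM⟩ with hx'def
    have hint : IsIntegral k x' := (Algebra.IsAlgebraic.isAlgebraic x').isIntegral
    have hx'range : x' ∉ (algebraMap k (algebraicClosure k ℂ)).range := by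
      rintro ⟨c, hc⟩
      apply hx
      have hcx : x = ((algebraMap k (algebraicClosure k ℂ) c : algebraicClosure k ℂ) : ℂ) :=
        congrArg Subtype.val hc.symm
      rw [hcx]
      exact c.2
    have hdeg : 2 ≤ (minpoly k x').natDegree := (minpoly.two_le_natDegree_iff hint).2 hx'range
    haveI : CharZero k := (RingHom.charZero_iff (algebraMap k ℂ).injective).2 inferInstance
    have hsep : (minpoly k x').Separable := (minpoly.irreducible hint).separable
    haveI : IsAlgClosed (algebraicClosure k ℂ) := (algebraicClosure.isAlgClosure k ℂ).isAlgClosed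
    have hsplits : ((minpoly k x').map (algebraMap k (algebraicClosure k ℂ))).Splits :=
      IsAlgClosed.splits _
    have hcard : (minpoly k x').natDegree
        = ((minpoly k x').map (algebraMap k (algebraicClosure k ℂ))).roots.card :=
      by rw [← Polynomial.natDegree_map (algebraMap k (algebraicClosure k ℂ))]; exact hsplits.natDegree_eq_card_roots
    have hnodup : ((minpoly k x').map (algebraMap k (algebraicClosure k ℂ))).roots.Nodup :=
      Polynomial.nodup_roots hsep.map
    have hx'root : x' ∈ ((minpoly k x').map (algebraMap k (algebraicClosure k ℂ))).roots := by
      rw [Polynomial.mem_roots']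
      refine ⟨Polynomial.map_ne_zero (minpoly.ne_zero hint), ?_⟩
      show Polynomial.eval x' _ = 0
      rw [Polynomial.eval_map, ← Polynomial.aeval_def, minpoly.aeval]
    obtain ⟨z, hz, hzx⟩ : ∃ z ∈ ((minpoly k x').map
        (algebraMap k (algebraicClosure k ℂ))).roots, z ≠ x' := by
      by_contra h
      push_neg at h
      have hsub : ((minpoly k x').map
          (algebraMap k (algebraicClosure k ℂ))).roots.toFinset ⊆ {x'} :=
        fun z hz => Finset.mem_singleton.2 (h z (Multiset.mem_toFinset.1 hz))
      have hle := Finset.card_le_card hsub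
      rw [Multiset.toFinset_card_of_nodup hnodup] at hle
      simp only [Finset.card_singleton] at hle
      rw [hcard] at hdeg
      omega
    have hzroot : Polynomial.aeval z (minpoly k x') = 0 := by
      have h2 := (Polynomial.mem_roots'.1 hz).2
      rwa [Polynomial.IsRoot, Polynomial.eval_map, ← Polynomial.aeval_def] at h2
    obtain ⟨τ, hτ⟩ := minpoly.exists_algEquiv_of_root (K := k) hint.isAlgebraic hzroot
    -- `τ z = x'`, so `τ.symm x' = z ≠ x'`.
    have hτsymm : τ.symm x' = z := by rw [← hτ, AlgEquiv.symm_apply_apply]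
    obtain ⟨s, hs⟩ := exists_isTranscendenceBasis (R := algebraicClosure k ℂ)
      (A := ℂ)
    obtain ⟨σ, hσ⟩ := ext_aut k s hs (MvPolynomial.mapEquiv _ τ.symm.toRingEquiv) τ.symm
      (fun m => by rw [MvPolynomial.mapEquiv_apply, MvPolynomial.map_C]; rfl)
    refine ⟨σ, ?_⟩
    have h1 := hσ (MvPolynomial.C x')
    simp only [MvPolynomial.mapEquiv_apply, MvPolynomial.map_C, MvPolynomial.aeval_C] at h1
    have hax : algebraMap (algebraicClosure k ℂ) ℂ x' = x := rfl
    rw [hax] at h1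
    rw [h1]
    intro hcontra
    have hfix : τ.symm x' = x' := Subtype.val_injective hcontra
    rw [hτsymm] at hfix
    exact hzx hfix
  · -- Case 2 : `x` is transcendental over the algebraic closure of `k` in `ℂ`.
    haveI : Algebra.IsIntegral k (algebraicClosure k ℂ) := Algebra.IsAlgebraic.isIntegral
    have hxT : Transcendental (algebraicClosure k ℂ) x := by
      intro h
      exact hxM (mem_algebraicClosure_iff'.2 (isIntegral_trans x h.isIntegral))
    have hxalg : AlgebraicIndependent (algebraicClosure k ℂ) ((↑) : ({x} : Set ℂ) → ℂ) := by
      rw [algebraicIndependent_unique_type_iff]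
      simpa using hxT
    obtain ⟨u, hxu, hmax⟩ := exists_maximal_algebraicIndependent ({x} : Set ℂ) Set.univ
      (Set.subset_univ _) hxalg
    have hu : IsTranscendenceBasis (algebraicClosure k ℂ) ((↑) : u → ℂ) := by
      refine ⟨hmax.1.1, fun t ht hut => ?_⟩
      simp only [Subtype.range_coe_subtype, Set.setOf_mem_eq] at *
      exact hmax.eq_of_le ⟨ht, Set.subset_univ _⟩ hut
    have hxu' : x ∈ u := hxu rfl
    set i₀ : u := ⟨x, hxu'⟩ with hi₀
    let f : MvPolynomial u (algebraicClosure k ℂ) →ₐ[algebraicClosure k ℂ]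
        MvPolynomial u (algebraicClosure k ℂ) :=
      MvPolynomial.aeval (fun i => if i = i₀ then MvPolynomial.X i + (1 : MvPolynomial u (algebraicClosure k ℂ)) else MvPolynomial.X i)
    let g : MvPolynomial u (algebraicClosure k ℂ) →ₐ[algebraicClosure k ℂ]
        MvPolynomial u (algebraicClosure k ℂ) :=
      MvPolynomial.aeval (fun i => if i = i₀ then MvPolynomial.X i - (1 : MvPolynomial u (algebraicClosure k ℂ)) else MvPolynomial.X i)
    have hfg : f.comp g = AlgHom.id _ _ := by
      apply MvPolynomial.algHom_ext
      intro i
      by_cases hi : i = i₀ <;> simp [f, g, hi]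
    have hgf : g.comp f = AlgHom.id _ _ := by
      apply MvPolynomial.algHom_ext
      intro i
      by_cases hi : i = i₀ <;> simp [f, g, hi]
    let E := AlgEquiv.ofAlgHom f g hfg hgf
    have hE : ∀ m, E.toRingEquiv (MvPolynomial.C m) = MvPolynomial.C m := by
      intro m
      show f (MvPolynomial.C m) = MvPolynomial.C m
      rw [show (MvPolynomial.C m : MvPolynomial u (algebraicClosure k ℂ))
        = algebraMap _ _ m from rfl, AlgHom.commutes]
    obtain ⟨σ, hσ⟩ := ext_aut k u hu E.toRingEquiv (AlgEquiv.refl) hE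
    refine ⟨σ, ?_⟩
    have h1 := hσ (MvPolynomial.X i₀)
    have h2 : E.toRingEquiv (MvPolynomial.X i₀) = MvPolynomial.X i₀ + (1 : MvPolynomial u (algebraicClosure k ℂ)) := by
      show f (MvPolynomial.X i₀) = _
      simp [f]
    rw [h2, MvPolynomial.aeval_X] at h1
    have h3 : MvPolynomial.aeval ((↑) : u → ℂ) (MvPolynomial.X i₀ + (1 : MvPolynomial u (algebraicClosure k ℂ))) = x + 1 := by
      rw [map_add, MvPolynomial.aeval_X, map_one]
    rw [h3] at h1
    have hix : ((i₀ : u) : ℂ) = x := rfl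
    rw [hix] at h1
    rw [h1]
    simp

end

/-- Let `k` be a subfield of ℂ (automatically perfect, being of
characteristic 0).  Then the fixed field of the automorphism group `Aut(ℂ/k)`
acting on ℂ is exactly `k`. -/
theorem stmt_10 (k : Subfield ℂ) :
    ∀ x : ℂ, (∀ σ : ℂ ≃ₐ[k] ℂ, σ x = x) ↔ x ∈ k := by
  intro x
  constructor
  · intro h
    by_contra hx
    obtain ⟨σ, hσ⟩ := exists_aut k x hx
    exact hσ (h σ)
  · intro hx σ
    have := σ.commutes ⟨x, hx⟩
    rwa [show algebraMap k ℂ ⟨x, hx⟩ = x from rfl] at this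
end

section
/- Let X ⊆ ℂⁿ be an irreducible affine variety defined over a subfield k₀ of ℂ (its minimal field of definition), let k be a subfield of ℂ containing k₀, and let f ∈ ℂ[X] be the image of a polynomial with integer coefficients such that ℂ[X] is a free ℂ[f]-module of rank d with a basis contained in the image of ℤ[z₁,…,z_n]. Then T_k(X), the k-subalgebra of ℂ[X] generated by the images of the coordinate functions, is a free k[f]-module of rank d. -/
open MvPolynomial

set_option synthInstance.maxHeartbeats 1000000
set_option maxHeartbeats 2000000

/-- Let `X ⊆ ℂⁿ` be an irreducible affine variety (vanishing ideal `I`,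
coordinate ring `ℂ[X] = ℂ[z]/I`) defined over a subfield `k₀` of ℂ which is its
minimal field of definition, let `k` be a subfield of ℂ containing `k₀`, and let
`f ∈ ℂ[X]` be the image of a polynomial with integer coefficients such that `ℂ[X]`
is a free `ℂ[f]`-module of rank `d` with a basis contained in the image of
`ℤ[z₁,…,z_n]`.  Then `T_k(X)`, the `k`-subalgebra of `ℂ[X]` generated by the images
of the coordinate functions, is a free `k[f]`-module of rank `d`: it admits a basis
`b` of `d` elements, i.e. a `k[f]`-linearly independent family whose `k[f]`-span is
exactly `T_k(X)`. -/
theorem stmt_11 (n : ℕ) (I : Ideal (MvPolynomial (Fin n) ℂ)) (hI : I.IsPrime)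
    (k₀ k : Subfield ℂ) (hk : k₀ ≤ k)
    (hdef : I = Ideal.span
      {p : MvPolynomial (Fin n) ℂ | p ∈ I ∧ ∀ mo, coeff mo p ∈ k₀})
    (hmin : ∀ k' : Subfield ℂ,
      I = Ideal.span {p : MvPolynomial (Fin n) ℂ | p ∈ I ∧ ∀ mo, coeff mo p ∈ k'} →
        k₀ ≤ k')
    (g : MvPolynomial (Fin n) ℤ) (d : ℕ)
    (hbasis : ∃ (c : Fin d → MvPolynomial (Fin n) ℤ)
        (B : Module.Basis (Fin d)
          (Algebra.adjoin ℂ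
            ({Ideal.Quotient.mk I (MvPolynomial.map (Int.castRingHom ℂ) g)} :
              Set (MvPolynomial (Fin n) ℂ ⧸ I)))
          (MvPolynomial (Fin n) ℂ ⧸ I)),
        ∀ i, B i = Ideal.Quotient.mk I
          (MvPolynomial.map (Int.castRingHom ℂ) (c i))) :
    letI : Algebra k (MvPolynomial (Fin n) ℂ ⧸ I) :=
      ((algebraMap ℂ (MvPolynomial (Fin n) ℂ ⧸ I)).comp k.subtype).toAlgebra
    ∃ b : Fin d → (MvPolynomial (Fin n) ℂ ⧸ I),
      (∀ i, b i ∈ Algebra.adjoin k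
        (Set.range fun j : Fin n => Ideal.Quotient.mk I (X j))) ∧
      LinearIndependent
        (Algebra.adjoin k
          ({Ideal.Quotient.mk I (MvPolynomial.map (Int.castRingHom ℂ) g)} :
            Set (MvPolynomial (Fin n) ℂ ⧸ I))) b ∧
      (Submodule.span
        (Algebra.adjoin k
          ({Ideal.Quotient.mk I (MvPolynomial.map (Int.castRingHom ℂ) g)} :
            Set (MvPolynomial (Fin n) ℂ ⧸ I)))
        (Set.range b) : Set (MvPolynomial (Fin n) ℂ ⧸ I)) =
      (Algebra.adjoin k
        (Set.range fun j : Fin n => Ideal.Quotient.mk I (X j)) :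
          Set (MvPolynomial (Fin n) ℂ ⧸ I)) := by
  letI : Algebra k (MvPolynomial (Fin n) ℂ ⧸ I) :=
    ((algebraMap ℂ (MvPolynomial (Fin n) ℂ ⧸ I)).comp k.subtype).toAlgebra
  set R := MvPolynomial (Fin n) ℂ with hR
  set Q := MvPolynomial (Fin n) ℂ ⧸ I with hQ
  set mk : R →+* Q := Ideal.Quotient.mk I with hmk
  set fbar : Q := mk (MvPolynomial.map (Int.castRingHom ℂ) g) with hfbar
  set A := Algebra.adjoin ℂ ({fbar} : Set Q) with hA
  set Ak := Algebra.adjoin k ({fbar} : Set Q) with hAk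
  set T := Algebra.adjoin k (Set.range fun j : Fin n => mk (X j)) with hT
  obtain ⟨c, B, hB⟩ := hbasis
  set b : Fin d → Q := fun i => mk (MvPolynomial.map (Int.castRingHom ℂ) (c i)) with hb
  -- algebraMap facts
  have halgk : ∀ x : k, algebraMap k Q x = algebraMap ℂ Q (x : ℂ) := fun _ => rfl
  have halgC : ∀ x : ℂ, algebraMap ℂ Q x = mk (C x) := fun _ => rfl
  -- integer-coefficient polynomials have coefficients in k
  have hint_coeff : ∀ (p : MvPolynomial (Fin n) ℤ) (m : Fin n →₀ ℕ),
      coeff m (MvPolynomial.map (Int.castRingHom ℂ) p) ∈ k := by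
    intro p m
    rw [coeff_map]
    exact intCast_mem k _
  -- polynomials with coefficients in k map into T
  have hmkT : ∀ p : R, (∀ m, coeff m p ∈ k) → mk p ∈ T := by
    intro p hp
    rw [p.as_sum]
    rw [map_sum]
    refine Subalgebra.sum_mem _ (fun v _ => ?_)
    rw [monomial_eq, map_mul]
    refine Subalgebra.mul_mem _ ?_ ?_
    · rw [← halgC]
      have h2 := Subalgebra.algebraMap_mem T (⟨coeff v p, hp v⟩ : ↥k)
      rwa [halgk] at h2
    · rw [Finsupp.prod, map_prod]
      refine Subalgebra.prod_mem _ (fun j _ => ?_)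
      rw [map_pow]
      exact Subalgebra.pow_mem _ (Algebra.subset_adjoin (Set.mem_range_self j)) _
  have hbT : ∀ i, b i ∈ T := fun i => hmkT _ (hint_coeff (c i))
  have hfT : fbar ∈ T := hmkT _ (hint_coeff g)
  have hfAk : fbar ∈ Ak := by
    rw [hAk]
    exact Algebra.subset_adjoin rfl
  have hAkA : ∀ x ∈ Ak, x ∈ A := by
    intro x hx
    refine Algebra.adjoin_induction (fun y hy => Algebra.subset_adjoin hy)
      (fun r => ?_) (fun y z _ _ hy hz => Subalgebra.add_mem _ hy hz)
      (fun y z _ _ hy hz => Subalgebra.mul_mem _ hy hz) hx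
    rw [halgk r]
    exact Subalgebra.algebraMap_mem A _
  -- every element of T is the image of a polynomial with coefficients in k
  have hTrepr : ∀ t ∈ T, ∃ p : R, (∀ m, coeff m p ∈ k) ∧ mk p = t := by
    intro t ht
    refine Algebra.adjoin_induction ?_ ?_ ?_ ?_ ht
    · rintro y ⟨j, rfl⟩
      refine ⟨X j, fun m => ?_, rfl⟩
      rw [coeff_X']
      split_ifs
      exacts [one_mem k, zero_mem k]
    · intro r
      refine ⟨C (r : ℂ), fun m => ?_, (halgk r).symm⟩
      rw [coeff_C]
      split_ifs
      · exact r.2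
      · exact zero_mem k
    · rintro y z _ _ ⟨p, hp, rfl⟩ ⟨q, hq, rfl⟩
      exact ⟨p + q, fun m => by rw [coeff_add]; exact add_mem (hp m) (hq m), map_add _ _ _⟩
    · rintro y z _ _ ⟨p, hp, rfl⟩ ⟨q, hq, rfl⟩
      refine ⟨p * q, fun m => ?_, map_mul _ _ _⟩
      rw [coeff_mul]
      exact sum_mem fun x _ => mul_mem (hp _) (hq _)
  -- projection of ℂ onto k, k-linearly
  set M : Submodule k ℂ := LinearMap.range (Algebra.linearMap k ℂ) with hM
  obtain ⟨N, hN⟩ := Submodule.exists_isCompl M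
  set π : ℂ →ₗ[k] ℂ := M.subtype ∘ₗ M.projectionOnto N hN with hπ
  have hπk : ∀ x : ℂ, π x ∈ k := by
    intro x
    obtain ⟨c0, hc0⟩ := (M.projectionOnto N hN x).2
    have he : π x = ((M.projectionOnto N hN x) : ℂ) := rfl
    rw [he, ← hc0]
    exact c0.2
  have hπfix : ∀ x ∈ k, π x = x := by
    intro x hx
    have hxM : x ∈ M := ⟨⟨x, hx⟩, rfl⟩
    have h1 := Submodule.projectionOnto_apply_left hN (⟨x, hxM⟩ : M)
    exact congrArg Subtype.val h1
  have hπmulmem : ∀ (x e : ℂ), e ∈ k → π (x * e) = π x * e := by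
    intro x e he
    have h1 : x * e = (⟨e, he⟩ : ↥k) • x := by
      show x * e = e * x
      ring
    rw [h1, map_smul]
    show e * π x = π x * e
    ring
  -- coefficientwise application of π to polynomials
  set Pi0 : R →+ R := { toFun := AddMonoidAlgebra.map π.toAddMonoidHom, map_zero' := AddMonoidAlgebra.map_zero _, map_add' := AddMonoidAlgebra.map_add _ } with hPi0
  have hPi0coeff : ∀ (p : R) (m : Fin n →₀ ℕ), coeff m (Pi0 p) = π (coeff m p) := by
    intro p m
    exact coeff_addMonoidAlgebraMap π.toAddMonoidHom p m
  have hPi0mul : ∀ (r s : R), (∀ m, coeff m s ∈ k) → Pi0 (r * s) = Pi0 r * s := by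
    intro r s hs
    apply MvPolynomial.ext
    intro m
    rw [hPi0coeff, coeff_mul, coeff_mul, map_sum]
    refine Finset.sum_congr rfl (fun x _ => ?_)
    rw [hπmulmem _ _ (hs x.2), hPi0coeff]
  have hPi0I : ∀ p ∈ I, Pi0 p ∈ I := by
    intro p hp
    rw [hdef] at hp
    obtain ⟨mno, fc, ge, hsum⟩ := Submodule.mem_span_set'.mp hp
    rw [← hsum, map_sum]
    refine sum_mem (fun i _ => ?_)
    have hgi := (ge i).2
    rw [smul_eq_mul, hPi0mul _ _ (fun m => hk (hgi.2 m))]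
    exact Ideal.mul_mem_left I _ hgi.1
  have hPi0C : ∀ e : ℂ, Pi0 (C e) = C (π e) := by
    intro e
    apply MvPolynomial.ext
    intro m
    rw [hPi0coeff, coeff_C, coeff_C]
    split_ifs
    · rfl
    · exact map_zero π
  have hPi0Cmul : ∀ (e : ℂ) (s : R), (∀ m, coeff m s ∈ k) → Pi0 (C e * s) = C (π e) * s := by
    intro e s hs
    rw [hPi0mul _ _ hs, hPi0C]
  have hPi0fix : ∀ s : R, (∀ m, coeff m s ∈ k) → Pi0 s = s := by
    intro s hs
    apply MvPolynomial.ext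
    intro m
    rw [hPi0coeff]
    exact hπfix _ (hs m)
  -- smul on Q by subalgebra elements is multiplication
  have hsmulA : ∀ (a : A) (q : Q), a • q = (a : Q) * q := fun _ _ => rfl
  have hsmulAk : ∀ (a : Ak) (q : Q), a • q = (a : Q) * q := fun _ _ => rfl
  -- linear independence
  have hli : LinearIndependent Ak b := by
    rw [Fintype.linearIndependent_iff]
    intro a ha i
    have hsum : ∑ i, (⟨(a i : Q), hAkA _ (a i).2⟩ : A) • B i = 0 := by
      calc ∑ i, (⟨(a i : Q), hAkA _ (a i).2⟩ : A) • B i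
          = ∑ i, a i • b i := by
            refine Finset.sum_congr rfl (fun i _ => ?_)
            rw [hsmulA, hsmulAk, hB i]
        _ = 0 := ha
    have h0 := Fintype.linearIndependent_iff.mp B.linearIndependent
      (fun i => ⟨(a i : Q), hAkA _ (a i).2⟩) hsum i
    have h1 : (a i : Q) = 0 := congrArg Subtype.val h0
    exact Subtype.ext h1
  -- hard direction of the span equality
  have hspan2 : ∀ t ∈ T, t ∈ Submodule.span Ak (Set.range b) := by
    intro t ht
    obtain ⟨pt, hptk, hptmk⟩ := hTrepr t ht
    have hrange : ∀ i, ∃ qp : Polynomial ℂ,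
        (Polynomial.aeval fbar) qp = ((B.repr t) i : Q) := by
      intro i
      have h2 : ((B.repr t) i : Q) ∈ Algebra.adjoin ℂ ({fbar} : Set Q) := (B.repr t i).2
      rw [Algebra.adjoin_singleton_eq_range_aeval] at h2
      exact h2
    choose qp hqp using hrange
    set u : Fin d → ℕ → R :=
      fun i m => MvPolynomial.map (Int.castRingHom ℂ) (g ^ m * c i) with hu
    have hmku : ∀ i m, mk (u i m) = fbar ^ m * b i := by
      intro i m
      rw [hu]
      simp only [map_mul, map_pow]
      rfl
    have huk : ∀ i m, ∀ mo, coeff mo (u i m) ∈ k := fun i m => hint_coeff _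
    set P : R := ∑ i, ∑ m ∈ Finset.range ((qp i).natDegree + 1),
      C ((qp i).coeff m) * u i m with hP
    have hmkP : mk P = t := by
      rw [hP, map_sum]
      calc ∑ i, mk (∑ m ∈ Finset.range ((qp i).natDegree + 1), C ((qp i).coeff m) * u i m)
          = ∑ i, ((B.repr t) i : Q) * b i := by
            refine Finset.sum_congr rfl (fun i _ => ?_)
            rw [map_sum, ← hqp i, Polynomial.aeval_eq_sum_range, Finset.sum_mul]
            refine Finset.sum_congr rfl (fun m _ => ?_)
            rw [map_mul, ← halgC, hmku, Algebra.smul_def, mul_assoc]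
        _ = ∑ i, (B.repr t) i • B i :=
            Finset.sum_congr rfl (fun i _ => by rw [hsmulA, hB i])
        _ = t := B.sum_repr t
    -- apply the coefficient projection
    have hsub : pt - P ∈ I := Ideal.Quotient.eq.mp (by rw [hptmk, hmkP])
    have hsub2 : Pi0 pt - Pi0 P ∈ I := by
      rw [← map_sub]
      exact hPi0I _ hsub
    have hPi0pt : Pi0 pt = pt := hPi0fix pt hptk
    have hPi0P : Pi0 P = ∑ i, ∑ m ∈ Finset.range ((qp i).natDegree + 1),
        C (π ((qp i).coeff m)) * u i m := by
      rw [hP, map_sum]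
      refine Finset.sum_congr rfl (fun i _ => ?_)
      rw [map_sum]
      exact Finset.sum_congr rfl (fun m _ => hPi0Cmul _ _ (huk i m))
    have ht2 : t = ∑ i, ∑ m ∈ Finset.range ((qp i).natDegree + 1),
        algebraMap ℂ Q (π ((qp i).coeff m)) * (fbar ^ m * b i) := by
      have h3 : mk pt = mk (Pi0 P) := by
        rw [← hPi0pt]
        exact Ideal.Quotient.eq.mpr hsub2
      rw [← hptmk, h3, hPi0P, map_sum]
      refine Finset.sum_congr rfl (fun i _ => ?_)
      rw [map_sum]
      refine Finset.sum_congr rfl (fun m _ => ?_)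
      rw [map_mul, ← halgC, hmku]
    rw [ht2]
    refine Submodule.sum_mem _ (fun i _ => Submodule.sum_mem _ (fun m _ => ?_))
    have hmem : algebraMap ℂ Q (π ((qp i).coeff m)) * fbar ^ m ∈ Ak := by
      refine Subalgebra.mul_mem Ak ?_ (Subalgebra.pow_mem Ak hfAk m)
      have h4 := Subalgebra.algebraMap_mem Ak (⟨π ((qp i).coeff m), hπk _⟩ : ↥k)
      rwa [halgk] at h4
    have h5 : algebraMap ℂ Q (π ((qp i).coeff m)) * (fbar ^ m * b i)
        = (⟨_, hmem⟩ : Ak) • b i := by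
      rw [hsmulAk, mul_assoc]
    rw [h5]
    exact Submodule.smul_mem _ _ (Submodule.subset_span (Set.mem_range_self i))
  -- easy direction of the span equality
  have hAkT : ∀ x ∈ Ak, x ∈ T :=
    fun x hx => Algebra.adjoin_le (Set.singleton_subset_iff.mpr hfT) hx
  have hspan1 : ∀ q ∈ Submodule.span Ak (Set.range b), q ∈ T := by
    intro q hq
    refine Submodule.span_induction ?_ ?_ ?_ ?_ hq
    · rintro x hx
      obtain ⟨i, rfl⟩ := hx
      exact hbT i
    · exact Subalgebra.zero_mem T
    · intro x y _ _ hx hy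
      exact Subalgebra.add_mem _ hx hy
    · intro a x _ hx
      rw [hsmulAk]
      exact Subalgebra.mul_mem _ (hAkT _ a.2) hx
  refine ⟨b, hbT, hli, ?_⟩
  ext q
  constructor
  · intro h
    exact hspan1 q h
  · intro h
    exact hspan2 q h
end

section
/- Let X be an irreducible affine curve in ℂⁿ, f ∈ ℂ[X] a finite regular function, and p ∈ ℂ[X] with minimal polynomial m(t) over ℂ(f) of degree e, having coefficients in ℂ[f]. Then the Zariski closure of the image of the regular map (f, p) : X → ℂ² is the irreducible plane curve cut out by the unique irreducible polynomial q(s,t) ∈ ℂ[s,t], monic of degree e in t, satisfying q(f, t) = m(t). -/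
open MvPolynomial

set_option synthInstance.maxHeartbeats 1000000
set_option maxHeartbeats 2000000

open Polynomial in
private lemma aux_exists_algebraMap {K : Type*} [Field K] [Algebra ℂ K] {x : K}
    (h : IsIntegral ℂ x) : ∃ c : ℂ, algebraMap ℂ K c = x := by
  refine ⟨-(minpoly ℂ x).coeff 0, ?_⟩
  have hq : (minpoly ℂ x).leadingCoeff = 1 := minpoly.monic h
  have hd : (minpoly ℂ x).degree = 1 :=
    IsAlgClosed.degree_eq_one_of_irreducible ℂ (minpoly.irreducible h)
  have h0 : Polynomial.aeval x (minpoly ℂ x) = 0 := minpoly.aeval ℂ x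
  rw [Polynomial.eq_X_add_C_of_degree_eq_one hd, hq, Polynomial.C_1, one_mul, map_add,
    Polynomial.aeval_X, Polynomial.aeval_C, add_eq_zero_iff_eq_neg] at h0
  rw [map_neg, ← h0]

open Polynomial in
private theorem aux_main {A K : Type*} [CommRing A] [IsDomain A] [Algebra ℂ A]
    [Field K] [Algebra A K] [Algebra ℂ K] [IsScalarTower ℂ A K] [IsFractionRing A K]
    (f p : A)
    (hnc : f ∉ Set.range (algebraMap ℂ A))
    (hfin : Module.Finite (Algebra.adjoin ℂ ({f} : Set A)) A)
    (hcoeff : ∀ j : ℕ,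
      ((minpoly (IntermediateField.adjoin ℂ ({algebraMap A K f} : Set K))
        (algebraMap A K p)).coeff j : K) ∈
        Algebra.adjoin ℂ ({algebraMap A K f} : Set K)) :
    ∃ q : Polynomial (Polynomial ℂ),
      Irreducible q ∧ q.Monic ∧
      q.natDegree = (minpoly (IntermediateField.adjoin ℂ ({algebraMap A K f} : Set K))
        (algebraMap A K p)).natDegree ∧
      Polynomial.map (Polynomial.aeval
        (⟨algebraMap A K f, IntermediateField.subset_adjoin ℂ _ (Set.mem_singleton _)⟩ :
          IntermediateField.adjoin ℂ ({algebraMap A K f} : Set K))).toRingHom q =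
        minpoly (IntermediateField.adjoin ℂ ({algebraMap A K f} : Set K)) (algebraMap A K p) ∧
      (∀ w : Polynomial (Polynomial ℂ),
        Polynomial.eval₂ ((Polynomial.aeval (algebraMap A K f)).toRingHom :
          Polynomial ℂ →+* K) (algebraMap A K p) w = 0 ↔ q ∣ w) ∧
      (∀ q' : Polynomial (Polynomial ℂ),
        Polynomial.map (Polynomial.aeval
          (⟨algebraMap A K f, IntermediateField.subset_adjoin ℂ _ (Set.mem_singleton _)⟩ :
            IntermediateField.adjoin ℂ ({algebraMap A K f} : Set K))).toRingHom q' =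
          minpoly (IntermediateField.adjoin ℂ ({algebraMap A K f} : Set K)) (algebraMap A K p) →
        q' = q) := by
  set F : K := algebraMap A K f with hF
  set Pp : K := algebraMap A K p with hPp
  set K₀ := IntermediateField.adjoin ℂ ({F} : Set K) with hK₀
  set F₀ : K₀ := ⟨F, IntermediateField.subset_adjoin ℂ _ (Set.mem_singleton _)⟩ with hF₀
  set m := minpoly K₀ Pp with hm
  set φ : Polynomial ℂ →ₐ[ℂ] K₀ := Polynomial.aeval F₀ with hφ
  have hι : Function.Injective (algebraMap A K) := IsFractionRing.injective A K
  -- transcendence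
  have htr : Transcendental ℂ F := by
    intro halg
    obtain ⟨c, hc⟩ := aux_exists_algebraMap halg.isIntegral
    apply hnc
    refine ⟨c, hι ?_⟩
    rw [← IsScalarTower.algebraMap_apply, hc]
  have htr₀ : Transcendental ℂ F₀ := by
    rw [transcendental_iff] at htr ⊢
    intro w hw
    apply htr w
    have := Polynomial.aeval_algHom_apply K₀.val F₀ w
    rw [hw] at this
    exact this.trans (map_zero _)
  have hφinj : Function.Injective φ := by
    exact transcendental_iff_injective.mp htr₀
  have hφinj' : Function.Injective (φ : Polynomial ℂ →+* K₀) := hφinj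
  have hmem : ∀ x : A, x ∈ Algebra.adjoin ℂ ({f} : Set A) → algebraMap A K x ∈ K₀ := by
    intro x hx
    rw [Algebra.adjoin_singleton_eq_range_aeval] at hx
    obtain ⟨w, rfl⟩ := (AlgHom.mem_range _).mp hx
    have h1 : algebraMap A K (Polynomial.aeval f w) = Polynomial.aeval F w :=
      (Polynomial.aeval_algHom_apply (IsScalarTower.toAlgHom ℂ A K) f w).symm
    rw [h1]
    apply IntermediateField.algebra_adjoin_le_adjoin ℂ _
    rw [Algebra.adjoin_singleton_eq_range_aeval]
    exact ⟨w, rfl⟩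
  haveI : Module.Finite (Algebra.adjoin ℂ ({f} : Set A)) A := hfin
  haveI : Algebra.IsIntegral (Algebra.adjoin ℂ ({f} : Set A)) A :=
    Algebra.IsIntegral.of_finite _ _
  have hpA : IsIntegral (Algebra.adjoin ℂ ({f} : Set A)) p := Algebra.IsIntegral.isIntegral p
  obtain ⟨r, hr_monic, hr0⟩ := hpA
  set ρ : (Algebra.adjoin ℂ ({f} : Set A)) →+* K₀ :=
    RingHom.codRestrict ((algebraMap A K).comp
      (Subalgebra.val (Algebra.adjoin ℂ ({f} : Set A))).toRingHom) K₀
      (fun x => hmem x.1 x.2) with hρ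
  have hint : IsIntegral K₀ Pp := by
    refine ⟨r.map ρ, hr_monic.map ρ, ?_⟩
    have h2 : (algebraMap K₀ K).comp ρ =
        (algebraMap A K).comp (algebraMap (Algebra.adjoin ℂ ({f} : Set A)) A) :=
      RingHom.ext fun x => rfl
    rw [Polynomial.eval₂_map, h2, ← Polynomial.hom_eval₂, hr0, map_zero]
  have hm_monic : m.Monic := minpoly.monic hint
  have hm_irr : Irreducible m := minpoly.irreducible hint
  have hlift : m ∈ Polynomial.lifts (φ : Polynomial ℂ →+* K₀) := by
    rw [Polynomial.lifts_iff_coeff_lifts]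
    intro j
    have hj := hcoeff j
    rw [Algebra.adjoin_singleton_eq_range_aeval] at hj
    obtain ⟨w, hw⟩ := (AlgHom.mem_range _).mp hj
    refine ⟨w, ?_⟩
    apply Subtype.ext
    show ((φ w : K₀) : K) = _
    rw [← hw]
    exact (Polynomial.aeval_algHom_apply K₀.val F₀ w).symm
  obtain ⟨q, hq_map, hq_deg, hq_monic⟩ := Polynomial.lifts_and_degree_eq_and_monic hlift hm_monic
  have hq_irr : Irreducible q :=
    Polynomial.Monic.irreducible_of_irreducible_map _ q hq_monic (by rw [hq_map]; exact hm_irr)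
  have hq_natdeg : q.natDegree = m.natDegree := Polynomial.natDegree_eq_of_degree_eq hq_deg
  have hcomp : (algebraMap K₀ K).comp (φ : Polynomial ℂ →+* K₀) =
      (Polynomial.aeval F).toRingHom := by
    apply RingHom.ext; intro w
    show algebraMap K₀ K (φ w) = Polynomial.aeval F w
    have := Polynomial.aeval_algHom_apply K₀.val F₀ w
    exact this.symm
  have hEkey : ∀ w : Polynomial (Polynomial ℂ),
      Polynomial.eval₂ ((Polynomial.aeval F).toRingHom : Polynomial ℂ →+* K) Pp w
        = Polynomial.aeval Pp (w.map (φ : Polynomial ℂ →+* K₀)) := by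
    intro w
    rw [Polynomial.aeval_def, Polynomial.eval₂_map, hcomp]
  have hker : ∀ w : Polynomial (Polynomial ℂ),
      Polynomial.eval₂ ((Polynomial.aeval F).toRingHom : Polynomial ℂ →+* K)
        Pp w = 0 ↔ q ∣ w := by
    intro w
    rw [hEkey]
    constructor
    · intro h0
      have hdvd : m ∣ w.map (φ : Polynomial ℂ →+* K₀) := minpoly.dvd K₀ Pp h0
      have hdiv := Polynomial.modByMonic_add_div w q
      have hrem : (w %ₘ q).map (φ : Polynomial ℂ →+* K₀) = 0 := by
        by_contra hne
        have h1 : m ∣ (w %ₘ q).map (φ : Polynomial ℂ →+* K₀) := by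
          have heq : (w %ₘ q).map (φ : Polynomial ℂ →+* K₀) =
              w.map (φ : Polynomial ℂ →+* K₀) -
                (q.map (φ : Polynomial ℂ →+* K₀)) * ((w /ₘ q).map (φ : Polynomial ℂ →+* K₀)) := by
            rw [← Polynomial.map_mul, ← Polynomial.map_sub]
            congr 1
            rw [eq_sub_iff_add_eq, hdiv]
          rw [heq, hq_map]
          exact dvd_sub hdvd (Dvd.intro _ rfl)
        have h2 := Polynomial.degree_le_of_dvd h1 hne
        have h3 : ((w %ₘ q).map (φ : Polynomial ℂ →+* K₀)).degree < m.degree := by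
          rw [Polynomial.degree_map_eq_of_injective hφinj']
          calc (w %ₘ q).degree < q.degree := Polynomial.degree_modByMonic_lt w hq_monic
            _ = m.degree := hq_deg
        exact absurd h2 (not_le.mpr h3)
      have hrem0 : w %ₘ q = 0 :=
        Polynomial.map_injective _ hφinj' (by rw [hrem, Polynomial.map_zero])
      rw [← hdiv, hrem0, zero_add]
      exact Dvd.intro _ rfl
    · rintro ⟨c, rfl⟩
      rw [Polynomial.map_mul, hq_map, map_mul, minpoly.aeval, zero_mul]
  refine ⟨q, hq_irr, hq_monic, hq_natdeg, hq_map, hker, ?_⟩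
  intro q' hq'
  exact Polynomial.map_injective _ hφinj' (hq'.trans hq_map.symm)



/-- Let `X` be an irreducible affine curve in ℂⁿ, `f ∈ ℂ[X]` a finite
regular function (the class of the polynomial `g`), and `p ∈ ℂ[X]` (the class of the
polynomial `P`) with minimal polynomial `m(t)` over `ℂ(f)` of degree `e`, having
coefficients in `ℂ[f]`.  Then the Zariski closure of the image of the regular map
`(f, p) : X → ℂ²` is the plane curve cut out by the unique irreducible polynomial
`q(s,t) ∈ ℂ[s][t]`, monic of degree `e` in `t`, satisfying `q(f, t) = m(t)`. -/
theorem stmt_17 (n : ℕ) (X : Set (Fin n → ℂ))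
    [hI : (vanishingIdeal ℂ X).IsPrime]
    (hcl : zeroLocus ℂ (vanishingIdeal ℂ X) = X)
    (hcurve : ringKrullDim (MvPolynomial (Fin n) ℂ ⧸ vanishingIdeal ℂ X) = 1)
    (g P : MvPolynomial (Fin n) ℂ)
    (hnc : Ideal.Quotient.mk (vanishingIdeal ℂ X) g ∉
      Set.range (algebraMap ℂ (MvPolynomial (Fin n) ℂ ⧸ vanishingIdeal ℂ X)))
    (hfin : Module.Finite
      (Algebra.adjoin ℂ
        ({Ideal.Quotient.mk (vanishingIdeal ℂ X) g} :
          Set (MvPolynomial (Fin n) ℂ ⧸ vanishingIdeal ℂ X)))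
      (MvPolynomial (Fin n) ℂ ⧸ vanishingIdeal ℂ X))
    (e : ℕ)
    (he : e = (minpoly
      (IntermediateField.adjoin ℂ
        ({algebraMap (MvPolynomial (Fin n) ℂ ⧸ vanishingIdeal ℂ X)
            (FractionRing (MvPolynomial (Fin n) ℂ ⧸ vanishingIdeal ℂ X))
            (Ideal.Quotient.mk (vanishingIdeal ℂ X) g)} :
          Set (FractionRing (MvPolynomial (Fin n) ℂ ⧸ vanishingIdeal ℂ X))))
      (algebraMap (MvPolynomial (Fin n) ℂ ⧸ vanishingIdeal ℂ X)
        (FractionRing (MvPolynomial (Fin n) ℂ ⧸ vanishingIdeal ℂ X))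
        (Ideal.Quotient.mk (vanishingIdeal ℂ X) P))).natDegree)
    (hcoeff : ∀ j : ℕ,
      ((minpoly
        (IntermediateField.adjoin ℂ
          ({algebraMap (MvPolynomial (Fin n) ℂ ⧸ vanishingIdeal ℂ X)
              (FractionRing (MvPolynomial (Fin n) ℂ ⧸ vanishingIdeal ℂ X))
              (Ideal.Quotient.mk (vanishingIdeal ℂ X) g)} :
            Set (FractionRing (MvPolynomial (Fin n) ℂ ⧸ vanishingIdeal ℂ X))))
        (algebraMap (MvPolynomial (Fin n) ℂ ⧸ vanishingIdeal ℂ X)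
          (FractionRing (MvPolynomial (Fin n) ℂ ⧸ vanishingIdeal ℂ X))
          (Ideal.Quotient.mk (vanishingIdeal ℂ X) P))).coeff j :
        FractionRing (MvPolynomial (Fin n) ℂ ⧸ vanishingIdeal ℂ X)) ∈
      Algebra.adjoin ℂ
        ({algebraMap (MvPolynomial (Fin n) ℂ ⧸ vanishingIdeal ℂ X)
            (FractionRing (MvPolynomial (Fin n) ℂ ⧸ vanishingIdeal ℂ X))
            (Ideal.Quotient.mk (vanishingIdeal ℂ X) g)} :
          Set (FractionRing (MvPolynomial (Fin n) ℂ ⧸ vanishingIdeal ℂ X)))) :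
    ∃! q : Polynomial (Polynomial ℂ),
      Irreducible q ∧ q.Monic ∧ q.natDegree = e ∧
      Polynomial.map
        (Polynomial.aeval
          (⟨algebraMap (MvPolynomial (Fin n) ℂ ⧸ vanishingIdeal ℂ X)
              (FractionRing (MvPolynomial (Fin n) ℂ ⧸ vanishingIdeal ℂ X))
              (Ideal.Quotient.mk (vanishingIdeal ℂ X) g),
            IntermediateField.subset_adjoin ℂ _ (Set.mem_singleton _)⟩ :
            IntermediateField.adjoin ℂ
              ({algebraMap (MvPolynomial (Fin n) ℂ ⧸ vanishingIdeal ℂ X)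
                  (FractionRing (MvPolynomial (Fin n) ℂ ⧸ vanishingIdeal ℂ X))
                  (Ideal.Quotient.mk (vanishingIdeal ℂ X) g)} :
                Set (FractionRing (MvPolynomial (Fin n) ℂ ⧸ vanishingIdeal ℂ X))))).toRingHom
        q =
      minpoly
        (IntermediateField.adjoin ℂ
          ({algebraMap (MvPolynomial (Fin n) ℂ ⧸ vanishingIdeal ℂ X)
              (FractionRing (MvPolynomial (Fin n) ℂ ⧸ vanishingIdeal ℂ X))
              (Ideal.Quotient.mk (vanishingIdeal ℂ X) g)} :
            Set (FractionRing (MvPolynomial (Fin n) ℂ ⧸ vanishingIdeal ℂ X))))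
        (algebraMap (MvPolynomial (Fin n) ℂ ⧸ vanishingIdeal ℂ X)
          (FractionRing (MvPolynomial (Fin n) ℂ ⧸ vanishingIdeal ℂ X))
          (Ideal.Quotient.mk (vanishingIdeal ℂ X) P)) ∧
      zeroLocus ℂ (vanishingIdeal ℂ
          ((fun x : Fin n → ℂ => ![eval x g, eval x P]) '' X)) =
        {v : Fin 2 → ℂ |
          Polynomial.eval₂ (Polynomial.evalRingHom (v 0)) (v 1) q = 0} := by
  classical
  obtain ⟨q, hq_irr, hq_monic, hq_natdeg, hq_map, hker, huniq⟩ :=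
    aux_main (K := FractionRing (MvPolynomial (Fin n) ℂ ⧸ vanishingIdeal ℂ X))
      (Ideal.Quotient.mk (vanishingIdeal ℂ X) g) (Ideal.Quotient.mk (vanishingIdeal ℂ X) P)
      hnc hfin hcoeff
  have hι : Function.Injective
      (algebraMap (MvPolynomial (Fin n) ℂ ⧸ vanishingIdeal ℂ X)
        (FractionRing (MvPolynomial (Fin n) ℂ ⧸ vanishingIdeal ℂ X))) :=
    IsFractionRing.injective _ _
  -- the two-variable polynomial ring and its isomorphism with `ℂ[s][t]`
  set θ : Polynomial (Polynomial ℂ) →ₐ[ℂ] MvPolynomial (Fin 2) ℂ :=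
    Polynomial.aevalTower (Polynomial.aeval (MvPolynomial.X 0)) (MvPolynomial.X 1) with hθdef
  set θinv : MvPolynomial (Fin 2) ℂ →ₐ[ℂ] Polynomial (Polynomial ℂ) :=
    MvPolynomial.aeval ![Polynomial.C Polynomial.X, Polynomial.X] with hθinvdef
  have hθθ : ∀ r, θ (θinv r) = r := by
    intro r
    have h : θ.comp θinv = AlgHom.id ℂ _ := by
      apply MvPolynomial.algHom_ext
      intro i
      fin_cases i <;>
        simp [hθdef, hθinvdef, Polynomial.aevalTower_X, Polynomial.aevalTower_C]
    calc θ (θinv r) = (θ.comp θinv) r := rfl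
      _ = r := by rw [h]; rfl
  set ψ : MvPolynomial (Fin 2) ℂ →ₐ[ℂ] (MvPolynomial (Fin n) ℂ ⧸ vanishingIdeal ℂ X) :=
    MvPolynomial.aeval (R := ℂ)
      ![Ideal.Quotient.mk (vanishingIdeal ℂ X) g, Ideal.Quotient.mk (vanishingIdeal ℂ X) P]
    with hψdef
  -- pointwise evaluation compatibility
  have haeqn : ∀ (x : Fin n → ℂ) (u : MvPolynomial (Fin n) ℂ),
      MvPolynomial.aeval (R := ℂ) x u = eval x u := fun x u =>
    RingHom.congr_fun (MvPolynomial.coe_aeval_eq_eval (f := x)) u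
  have haeq2 : ∀ (y : Fin 2 → ℂ) (u : MvPolynomial (Fin 2) ℂ),
      MvPolynomial.aeval (R := ℂ) y u = eval y u := fun y u =>
    RingHom.congr_fun (MvPolynomial.coe_aeval_eq_eval (f := y)) u
  have heval : ∀ (x : Fin n → ℂ) (r : MvPolynomial (Fin 2) ℂ),
      eval (![eval x g, eval x P]) r = eval x (MvPolynomial.aeval (R := ℂ) ![g, P] r) := by
    intro x r
    have h2 : (fun i => MvPolynomial.aeval (R := ℂ) x (![g, P] i)) = ![eval x g, eval x P] := by
      funext i
      fin_cases i <;> simp [haeqn]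
    calc eval (![eval x g, eval x P]) r
        = MvPolynomial.aeval (R := ℂ) (![eval x g, eval x P]) r := (haeq2 _ r).symm
      _ = MvPolynomial.aeval (R := ℂ) (fun i => MvPolynomial.aeval (R := ℂ) x (![g, P] i)) r :=
          by rw [h2]
      _ = MvPolynomial.aeval (R := ℂ) x (MvPolynomial.aeval (R := ℂ) ![g, P] r) := by
          rw [← MvPolynomial.comp_aeval]; rfl
      _ = eval x (MvPolynomial.aeval (R := ℂ) ![g, P] r) := haeqn x _
  -- membership in the vanishing ideal of the image
  have hpsi : ∀ r : MvPolynomial (Fin 2) ℂ,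
      r ∈ vanishingIdeal ℂ ((fun x : Fin n → ℂ => ![eval x g, eval x P]) '' X) ↔ ψ r = 0 := by
    intro r
    have hcomp2 : ψ r = Ideal.Quotient.mk (vanishingIdeal ℂ X)
        (MvPolynomial.aeval (R := ℂ) ![g, P] r) := by
      have h : (Ideal.Quotient.mkₐ ℂ (vanishingIdeal ℂ X)).comp
          (MvPolynomial.aeval (R := ℂ) ![g, P]) = ψ := by
        rw [MvPolynomial.comp_aeval]
        congr 1
        funext i
        fin_cases i <;> rfl
      rw [← h]; rfl
    rw [hcomp2, Ideal.Quotient.eq_zero_iff_mem]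
    constructor
    · intro hr x hx
      have h3 := hr _ ⟨x, hx, rfl⟩
      beta_reduce at h3; rwa [haeq2, heval x r, ← haeqn] at h3
    · rintro hr y ⟨x, hx, rfl⟩
      beta_reduce; rw [haeq2, heval x r, ← haeqn]
      exact hr x hx
  -- the big composite equals the abstract evaluation map
  have hbig : ∀ w : Polynomial (Polynomial ℂ),
      algebraMap (MvPolynomial (Fin n) ℂ ⧸ vanishingIdeal ℂ X)
          (FractionRing (MvPolynomial (Fin n) ℂ ⧸ vanishingIdeal ℂ X)) (ψ (θ w)) =
        Polynomial.eval₂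
          ((Polynomial.aeval (algebraMap (MvPolynomial (Fin n) ℂ ⧸ vanishingIdeal ℂ X)
            (FractionRing (MvPolynomial (Fin n) ℂ ⧸ vanishingIdeal ℂ X))
            (Ideal.Quotient.mk (vanishingIdeal ℂ X) g))).toRingHom)
          (algebraMap (MvPolynomial (Fin n) ℂ ⧸ vanishingIdeal ℂ X)
            (FractionRing (MvPolynomial (Fin n) ℂ ⧸ vanishingIdeal ℂ X))
            (Ideal.Quotient.mk (vanishingIdeal ℂ X) P)) w := by
    have hhom : ((algebraMap (MvPolynomial (Fin n) ℂ ⧸ vanishingIdeal ℂ X)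
          (FractionRing (MvPolynomial (Fin n) ℂ ⧸ vanishingIdeal ℂ X))).comp
            ψ.toRingHom).comp θ.toRingHom =
        Polynomial.eval₂RingHom
          ((Polynomial.aeval (algebraMap (MvPolynomial (Fin n) ℂ ⧸ vanishingIdeal ℂ X)
            (FractionRing (MvPolynomial (Fin n) ℂ ⧸ vanishingIdeal ℂ X))
            (Ideal.Quotient.mk (vanishingIdeal ℂ X) g))).toRingHom)
          (algebraMap (MvPolynomial (Fin n) ℂ ⧸ vanishingIdeal ℂ X)
            (FractionRing (MvPolynomial (Fin n) ℂ ⧸ vanishingIdeal ℂ X))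
            (Ideal.Quotient.mk (vanishingIdeal ℂ X) P)) := by
      apply Polynomial.ringHom_ext'
      · apply Polynomial.ringHom_ext
        · intro a
          simp [hθdef, hψdef, Polynomial.aevalTower_C, ← IsScalarTower.algebraMap_apply]
        · simp [hθdef, hψdef, Polynomial.aevalTower_C]
      · simp [hθdef, hψdef, Polynomial.aevalTower_X]
    intro w
    have h := RingHom.congr_fun hhom w
    simpa using h
  -- the vanishing ideal of the image is the principal ideal generated by `θ q`
  have hJmem : ∀ w : Polynomial (Polynomial ℂ),
      θ w ∈ vanishingIdeal ℂ ((fun x : Fin n → ℂ => ![eval x g, eval x P]) '' X) ↔ q ∣ w := by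
    intro w
    rw [← hker w, ← hbig w, map_eq_zero_iff _ hι]
    exact hpsi (θ w)
  have hJ : vanishingIdeal ℂ ((fun x : Fin n → ℂ => ![eval x g, eval x P]) '' X) =
      Ideal.span {θ q} := by
    apply le_antisymm
    · intro r hr
      rw [← hθθ r] at hr ⊢
      obtain ⟨c, hc⟩ := (hJmem _).mp hr
      rw [hc, map_mul]
      exact Ideal.mul_mem_right _ _ (Ideal.subset_span rfl)
    · rw [Ideal.span_le, Set.singleton_subset_iff]
      exact (hJmem q).mpr dvd_rfl
  have hevalθ : ∀ (v : Fin 2 → ℂ) (w : Polynomial (Polynomial ℂ)),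
      eval v (θ w) = Polynomial.eval₂ (Polynomial.evalRingHom (v 0)) (v 1) w := by
    intro v w
    have h : (MvPolynomial.eval v).comp θ.toRingHom =
        Polynomial.eval₂RingHom (Polynomial.evalRingHom (v 0)) (v 1) := by
      apply Polynomial.ringHom_ext'
      · apply Polynomial.ringHom_ext
        · intro a; simp [hθdef, Polynomial.aevalTower_C]
        · simp [hθdef, Polynomial.aevalTower_C]
      · simp [hθdef, Polynomial.aevalTower_X]
    have h2 := RingHom.congr_fun h w
    simpa using h2
  refine ⟨q, ⟨hq_irr, hq_monic, by rw [hq_natdeg, ← he], hq_map, ?_⟩, ?_⟩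
  · rw [hJ, zeroLocus_span]
    ext v
    simp only [Set.mem_setOf_eq, Set.mem_singleton_iff, forall_eq]
    rw [haeq2, hevalθ v q]
  · rintro q' ⟨-, -, -, hmap, -⟩
    exact huniq q' hmap
end

section
/- Let X₁, …, X_m be distinct irreducible affine curves in ℂⁿ, each equipped with a finite dominant regular function f_i to ℂ induced by a common polynomial g. Then there exists a polynomial p ∈ ℂ[z₁,…,z_n] such that for each i, the restriction p_i of p to X_i is a primitive element of ℂ(X_i) over ℂ(f_i), its minimal polynomial is monic of degree d_i with coefficients in ℂ[f_i], and the corresponding normalized irreducible polynomials q_i(s,t) ∈ ℂ[s,t] are pairwise distinct. -/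
open MvPolynomial
set_option synthInstance.maxHeartbeats 1000000
set_option maxHeartbeats 4000000
noncomputable section AuxStmt18


open Polynomial IntermediateField

/-- Pigeonhole engine: if there are finitely many intermediate fields, the set of bad
translation parameters is finite. -/
lemma aux_engine18 {F E : Type*} [Field F] [Field E] [Algebra F E] [Algebra ℂ E] [Algebra ℂ F]
    [IsScalarTower ℂ F E] [Finite (IntermediateField F E)]
    (α β : E) (T : Set E)
    (hT : IntermediateField.adjoin F (insert α (insert β T)) = ⊤) :
    {c : ℂ | IntermediateField.adjoin F (insert (α + algebraMap ℂ E c * β) T) ≠ ⊤}.Finite := by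
  by_contra hinf
  rw [Set.not_infinite.symm, not_not] at hinf
  obtain ⟨c, hc, c', hc', hne, heq⟩ :=
    hinf.exists_ne_map_eq_of_mapsTo (f := fun c : ℂ =>
      IntermediateField.adjoin F (insert (α + algebraMap ℂ E c * β) T))
      (Set.mapsTo_univ _ _) Set.finite_univ
  set M := IntermediateField.adjoin F (insert (α + algebraMap ℂ E c * β) T) with hM
  have h1 : α + algebraMap ℂ E c * β ∈ M := subset_adjoin _ _ (Set.mem_insert _ _)
  have h2 : α + algebraMap ℂ E c' * β ∈ M := by
    rw [heq]; exact subset_adjoin _ _ (Set.mem_insert _ _)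
  have hTM : T ⊆ (M : Set E) := fun x hx =>
    subset_adjoin _ _ (Set.mem_insert_of_mem _ hx)
  have hsub : algebraMap ℂ E (c - c') * β ∈ M := by
    have := M.sub_mem h1 h2
    rwa [show α + algebraMap ℂ E c * β - (α + algebraMap ℂ E c' * β)
        = algebraMap ℂ E (c - c') * β by rw [map_sub]; ring] at this
  have hu : algebraMap ℂ F (c - c') ≠ 0 := by
    rw [map_sub]
    intro h0
    exact hne ((algebraMap ℂ F).injective (sub_eq_zero.mp h0))
  have hβ : β ∈ M := by
    have h3 : (algebraMap ℂ F (c - c') : F) • β ∈ M := by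
      rwa [Algebra.smul_def, ← IsScalarTower.algebraMap_apply]
    have h4 := M.smul_mem h3 (x := (algebraMap ℂ F (c - c'))⁻¹)
    rwa [inv_smul_smul₀ hu] at h4
  have hα : α ∈ M := by
    have h4 : algebraMap ℂ E c * β ∈ M := by
      rw [IsScalarTower.algebraMap_apply ℂ F E, ← Algebra.smul_def]
      exact M.smul_mem hβ
    have := M.sub_mem h1 h4
    simpa using this
  have : IntermediateField.adjoin F (insert α (insert β T)) ≤ M := by
    rw [adjoin_le_iff]
    exact Set.insert_subset hα (Set.insert_subset hβ hTM)
  rw [hT, top_le_iff] at this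
  exact hc this

/-- Only finitely many `c` make `α + c β` a root of a nonzero polynomial. -/
lemma aux_roots18 {E : Type*} [Field E] [Algebra ℂ E] (α β : E) (hβ : β ≠ 0)
    (D : Polynomial E) (hD : D ≠ 0) :
    {c : ℂ | D.eval (α + algebraMap ℂ E c * β) = 0}.Finite := by
  have : {c : ℂ | D.eval (α + algebraMap ℂ E c * β) = 0}
      = (fun c : ℂ => α + algebraMap ℂ E c * β) ⁻¹' {x | D.IsRoot x} := rfl
  rw [this]
  refine Set.Finite.preimage ?_ (Polynomial.finite_setOf_isRoot hD)
  intro a _ b _ h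
  simp only at h
  have h' : algebraMap ℂ E a * β = algebraMap ℂ E b * β := by
    have := congrArg (fun z => z - α) h
    simpa [add_sub_cancel_left] using this
  exact (algebraMap ℂ E).injective (mul_right_cancel₀ hβ h')

end AuxStmt18

noncomputable section Curve18
open Polynomial IntermediateField

variable {n : ℕ} (I : Ideal (MvPolynomial (Fin n) ℂ)) [I.IsPrime] (g : MvPolynomial (Fin n) ℂ)

local notation "R18" => MvPolynomial (Fin n) ℂ ⧸ I
local notation "L18" => FractionRing (MvPolynomial (Fin n) ℂ ⧸ I)

abbrev res18 (p : MvPolynomial (Fin n) ℂ) : L18 :=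
  algebraMap (MvPolynomial (Fin n) ℂ ⧸ I) (FractionRing (MvPolynomial (Fin n) ℂ ⧸ I))
    (Ideal.Quotient.mk I p)

abbrev Kf18 : IntermediateField ℂ (FractionRing (MvPolynomial (Fin n) ℂ ⧸ I)) :=
  IntermediateField.adjoin ℂ {res18 I g}

/-- Any intermediate field of `L` over `K` containing the images of the coordinates
is everything. -/
lemma eq_top_of_res18_X (M : IntermediateField (Kf18 I g) L18)
    (hX : ∀ k : Fin n, res18 I (MvPolynomial.X k) ∈ M) : M = ⊤ := by
  have hres : ∀ p : MvPolynomial (Fin n) ℂ, res18 I p ∈ M := by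
    intro p
    induction p using MvPolynomial.induction_on with
    | C a =>
      have h1 : res18 I (MvPolynomial.C a) = algebraMap (Kf18 I g) L18 (algebraMap ℂ (Kf18 I g) a) := by
        rw [← IsScalarTower.algebraMap_apply]
        show algebraMap R18 L18 (algebraMap ℂ R18 a) = algebraMap ℂ L18 a
        rw [← IsScalarTower.algebraMap_apply]
      rw [h1]
      exact M.algebraMap_mem _
    | add p q hp hq =>
      have h1 : res18 I (p + q) = res18 I p + res18 I q := by
        show algebraMap R18 L18 _ = _
        rw [map_add, map_add]
      rw [h1]; exact add_mem hp hq
    | mul_X p k hp =>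
      have h1 : res18 I (p * MvPolynomial.X k) = res18 I p * res18 I (MvPolynomial.X k) := by
        show algebraMap R18 L18 _ = _
        rw [map_mul, map_mul]
      rw [h1]; exact mul_mem hp (hX k)
  rw [eq_top_iff]
  intro x _
  obtain ⟨a, b, -, rfl⟩ := IsFractionRing.div_surjective (A := R18) x
  obtain ⟨p, rfl⟩ := Ideal.Quotient.mk_surjective (I := I) a
  obtain ⟨q, rfl⟩ := Ideal.Quotient.mk_surjective (I := I) b
  exact div_mem (hres p) (hres q)

lemma adjoin_res18_X_top :
    IntermediateField.adjoin (Kf18 I g)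
      (Set.range fun k : Fin n => res18 I (MvPolynomial.X k)) = ⊤ :=
  eq_top_of_res18_X I g _ (fun k => subset_adjoin _ _ ⟨k, rfl⟩)


lemma res18_transcendental
    (hnc : Ideal.Quotient.mk I g ∉ Set.range (algebraMap ℂ R18)) :
    Transcendental ℂ (res18 I g) := by
  intro halg
  have hint : IsIntegral ℂ (res18 I g) := halg.isIntegral
  have hdeg : (minpoly ℂ (res18 I g)).degree = 1 :=
    IsAlgClosed.degree_eq_one_of_irreducible ℂ (minpoly.irreducible hint)
  obtain ⟨a, ha⟩ := (minpoly.degree_eq_one_iff).mp hdeg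
  have h2 : algebraMap R18 L18 (Ideal.Quotient.mk I g)
      = algebraMap R18 L18 (algebraMap ℂ R18 a) := by
    rw [← IsScalarTower.algebraMap_apply]; exact ha.symm
  exact hnc ⟨a, (IsFractionRing.injective R18 L18 h2).symm⟩

lemma mem_Kf18_of_adjoin {a : R18}
    (ha : a ∈ Algebra.adjoin ℂ ({Ideal.Quotient.mk I g} : Set R18)) :
    algebraMap R18 L18 a ∈ Kf18 I g := by
  rw [Algebra.adjoin_singleton_eq_range_aeval] at ha
  obtain ⟨u, hu⟩ := ha
  simp only [AlgHom.toRingHom_eq_coe, RingHom.coe_coe] at hu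
  have h1 : algebraMap R18 L18 a = Polynomial.aeval (res18 I g) u := by
    rw [← hu]
    exact (Polynomial.aeval_algebraMap_apply _ _ _).symm
  rw [h1]
  exact IntermediateField.algebra_adjoin_le_adjoin ℂ _
    (by rw [Algebra.adjoin_singleton_eq_range_aeval]; exact Set.mem_range_self u)

lemma isIntegral_Kf18_res (hMF : Module.Finite
      (Algebra.adjoin ℂ ({Ideal.Quotient.mk I g} : Set R18)) R18) (r : R18) :
    IsIntegral (Kf18 I g) (algebraMap R18 L18 r) := by
  set A := Algebra.adjoin ℂ ({Ideal.Quotient.mk I g} : Set R18) with hA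
  haveI := hMF
  have hintA : IsIntegral A r := Algebra.IsIntegral.isIntegral (R := A) r
  obtain ⟨P, hPm, hPe⟩ := hintA
  let ψ : A →+* Kf18 I g :=
    ((algebraMap R18 L18).comp (algebraMap A R18)).codRestrict
      (Kf18 I g).toSubfield (fun a => mem_Kf18_of_adjoin I g a.2)
  refine ⟨P.map ψ, hPm.map ψ, ?_⟩
  have h1 : eval₂ (algebraMap (Kf18 I g) L18) (algebraMap R18 L18 r) (P.map ψ)
      = eval₂ ((algebraMap (Kf18 I g) L18).comp ψ) (algebraMap R18 L18 r) P :=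
    eval₂_map ψ _ _
  have h2 : (algebraMap (Kf18 I g) L18).comp ψ
      = (algebraMap R18 L18).comp (algebraMap A R18) := rfl
  have h3 : eval₂ ((algebraMap R18 L18).comp (algebraMap A R18)) (algebraMap R18 L18 r) P
      = algebraMap R18 L18 (eval₂ (algebraMap A R18) r P) :=
    (Polynomial.hom_eval₂ P (algebraMap A R18) (algebraMap R18 L18) r).symm
  rw [h1, h2, h3, hPe, map_zero]

lemma finiteDimensional_Kf18 (hMF : Module.Finite
      (Algebra.adjoin ℂ ({Ideal.Quotient.mk I g} : Set R18)) R18) :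
    FiniteDimensional (Kf18 I g) L18 := by
  set A := Algebra.adjoin ℂ ({Ideal.Quotient.mk I g} : Set R18) with hA
  haveI := hMF
  obtain ⟨s, hs⟩ := Module.finite_def.mp hMF
  set Sset : Set L18 := (algebraMap R18 L18) '' ↑s with hSset
  have hfinS : Sset.Finite := s.finite_toSet.image _
  haveI : Finite ↥Sset := hfinS.to_subtype
  have hint : ∀ x ∈ Sset, IsIntegral (Kf18 I g) x := by
    rintro - ⟨r, -, rfl⟩
    exact isIntegral_Kf18_res I g hMF r
  haveI : FiniteDimensional (Kf18 I g) (IntermediateField.adjoin (Kf18 I g) Sset) :=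
    IntermediateField.finiteDimensional_adjoin hint
  have hadj : IntermediateField.adjoin (Kf18 I g) Sset = ⊤ := by
    rw [eq_top_iff]
    intro x _
    obtain ⟨a, b, -, rfl⟩ := IsFractionRing.div_surjective (A := R18) x
    have hres : ∀ r : R18, algebraMap R18 L18 r ∈ IntermediateField.adjoin (Kf18 I g) Sset := by
      intro r
      have hr : r ∈ Submodule.span A (↑s : Set R18) := by rw [hs]; trivial
      induction hr using Submodule.span_induction with
      | mem x hx => exact subset_adjoin _ _ ⟨x, hx, rfl⟩
      | zero => rw [map_zero]; exact zero_mem _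
      | add x y _ _ hx hy => rw [map_add]; exact add_mem hx hy
      | smul a x _ hx =>
        have hsm : algebraMap R18 L18 (a • x)
            = algebraMap R18 L18 (a : R18) * algebraMap R18 L18 x := by
          rw [show (a • x : R18) = (a : R18) * x from rfl, map_mul]
        rw [hsm]
        exact mul_mem (IntermediateField.algebraMap_mem _
          (⟨algebraMap R18 L18 (a : R18), mem_Kf18_of_adjoin I g a.2⟩ : Kf18 I g)) hx
    exact div_mem (hres a) (hres b)
  rw [hadj] at this
  exact Module.Finite.equiv (IntermediateField.topEquiv (F := Kf18 I g) (E := L18)).toLinearEquiv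

lemma finite_intermediateField_Kf18 (hMF : Module.Finite
      (Algebra.adjoin ℂ ({Ideal.Quotient.mk I g} : Set R18)) R18) :
    Finite (IntermediateField (Kf18 I g) L18) := by
  haveI := finiteDimensional_Kf18 I g hMF
  haveI : CharZero (Kf18 I g) :=
    charZero_of_injective_algebraMap (algebraMap ℂ (Kf18 I g)).injective
  haveI : Algebra.IsIntegral (Kf18 I g) L18 := Algebra.IsIntegral.of_finite _ _
  haveI : Algebra.IsSeparable (Kf18 I g) L18 := Algebra.IsSeparable.of_integral _ _
  obtain ⟨α, hα⟩ := Field.exists_primitive_element (Kf18 I g) L18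
  exact (Field.exists_primitive_element_iff_finite_intermediateField _ _).mp
    ⟨inferInstance, α, hα⟩

lemma phi18_val (u : Polynomial ℂ) :
    algebraMap (Kf18 I g) L18
      ((Polynomial.aeval (⟨res18 I g,
        IntermediateField.subset_adjoin ℂ _ (Set.mem_singleton _)⟩ : Kf18 I g)).toRingHom u)
      = Polynomial.aeval (res18 I g) u := by
  exact (Polynomial.aeval_algHom_apply (Kf18 I g).val
    (⟨res18 I g, IntermediateField.subset_adjoin ℂ _ (Set.mem_singleton _)⟩ : Kf18 I g) u).symm

lemma phi18_injective
    (hnc : Ideal.Quotient.mk I g ∉ Set.range (algebraMap ℂ R18)) :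
    Function.Injective (Polynomial.aeval (R := ℂ) (⟨res18 I g,
        IntermediateField.subset_adjoin ℂ _ (Set.mem_singleton _)⟩ : Kf18 I g)).toRingHom := by
  have htr := res18_transcendental I g hnc
  intro u v huv
  have h1 : Polynomial.aeval (res18 I g) u = Polynomial.aeval (res18 I g) v := by
    rw [← phi18_val I g u, ← phi18_val I g v, huv]
  have h2 : Polynomial.aeval (res18 I g) (u - v) = 0 := by rw [map_sub, h1, sub_self]
  exact sub_eq_zero.mp ((transcendental_iff.mp htr) (u - v) h2)
set_option maxHeartbeats 8000000 in
lemma exists_q18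
    (hnc : Ideal.Quotient.mk I g ∉ Set.range (algebraMap ℂ R18))
    (hMF : Module.Finite
      (Algebra.adjoin ℂ ({Ideal.Quotient.mk I g} : Set R18)) R18)
    (p : MvPolynomial (Fin n) ℂ) :
    ∃ q : Polynomial (Polynomial ℂ), q.Monic ∧
      Polynomial.map (Polynomial.aeval (R := ℂ) (⟨res18 I g,
        IntermediateField.subset_adjoin ℂ _ (Set.mem_singleton _)⟩ : Kf18 I g)).toRingHom q
        = minpoly (Kf18 I g) (res18 I p) := by
  set A := Algebra.adjoin ℂ ({Ideal.Quotient.mk I g} : Set R18) with hA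
  haveI := hMF
  set φ : Polynomial ℂ →+* Kf18 I g := (Polynomial.aeval (R := ℂ) (⟨res18 I g,
        IntermediateField.subset_adjoin ℂ _ (Set.mem_singleton _)⟩ : Kf18 I g)).toRingHom with hφ
  have hφval : ∀ u, algebraMap (Kf18 I g) L18 (φ u) = Polynomial.aeval (res18 I g) u :=
    phi18_val I g
  have hφinj : Function.Injective φ := phi18_injective I g hnc
  letI : Algebra (Polynomial ℂ) (Kf18 I g) := φ.toAlgebra
  letI : Algebra (Polynomial ℂ) L18 := ((algebraMap (Kf18 I g) L18).comp φ).toAlgebra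
  haveI : IsScalarTower (Polynomial ℂ) (Kf18 I g) L18 := by
    refine ⟨fun x y z => ?_⟩
    have h1 : ((x • y : Kf18 I g) : L18) = algebraMap (Polynomial ℂ) L18 x * (y : L18) := by
      show (((φ x) * y : Kf18 I g) : L18) = _
      push_cast
      rfl
    show ((x • y : Kf18 I g) : L18) * z = algebraMap (Polynomial ℂ) L18 x * ((y : L18) * z)
    rw [h1, mul_assoc]
  haveI hFR : IsFractionRing (Polynomial ℂ) (Kf18 I g) := by
    constructor
    constructor
    · rintro ⟨y, hy⟩
      have hy0 : y ≠ 0 := nonZeroDivisors.ne_zero hy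
      apply isUnit_iff_ne_zero.mpr
      intro h0
      exact hy0 (hφinj (show φ y = φ 0 by rw [map_zero]; exact h0))
    · rintro z
      have hz : (z : L18) ∈ IntermediateField.adjoin ℂ {res18 I g} := z.2
      rw [IntermediateField.mem_adjoin_simple_iff] at hz
      obtain ⟨r, s, hrs⟩ := hz
      by_cases hs0 : Polynomial.aeval (res18 I g) s = 0
      · refine ⟨(0, 1), ?_⟩
        have hz0 : (z : L18) = 0 := by rw [hrs, hs0, div_zero]
        have : z = 0 := Subtype.ext hz0
        rw [this]
        simp
      · have hsne : s ∈ nonZeroDivisors (Polynomial ℂ) := by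
          rw [mem_nonZeroDivisors_iff_ne_zero]
          intro h0
          exact hs0 (by rw [h0, map_zero])
        refine ⟨(r, ⟨s, hsne⟩), ?_⟩
        apply Subtype.ext
        show (z : L18) * algebraMap (Kf18 I g) L18 (φ s) = algebraMap (Kf18 I g) L18 (φ r)
        rw [hφval, hφval, hrs, div_mul_cancel₀ _ hs0]
    · intro x y hxy
      exact ⟨1, by rw [hφinj hxy]⟩
  have hintCX : IsIntegral (Polynomial ℂ) (res18 I p) := by
    have hintA : IsIntegral A (Ideal.Quotient.mk I p) :=
      Algebra.IsIntegral.isIntegral (R := A) _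
    obtain ⟨P, hPm, hPe⟩ := hintA
    have hmemA : ∀ u : Polynomial ℂ,
        Polynomial.aeval (Ideal.Quotient.mk I g) u ∈ A := by
      intro u
      rw [hA, Algebra.adjoin_singleton_eq_range_aeval]
      exact Set.mem_range_self u
    set σ : Polynomial ℂ →ₐ[ℂ] A :=
      (Polynomial.aeval (R := ℂ) (Ideal.Quotient.mk I g)).codRestrict A hmemA with hσ
    have hσsurj : Function.Surjective σ := by
      intro a
      have ha : (a : R18) ∈ Algebra.adjoin ℂ ({Ideal.Quotient.mk I g} : Set R18) := a.2
      rw [Algebra.adjoin_singleton_eq_range_aeval] at ha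
      obtain ⟨u, hu⟩ := ha
      simp only [AlgHom.toRingHom_eq_coe, RingHom.coe_coe] at hu
      exact ⟨u, Subtype.ext hu⟩
    have hl : P ∈ Polynomial.lifts σ.toRingHom := by
      rw [Polynomial.lifts_iff_coeff_lifts]
      intro k
      obtain ⟨u, hu⟩ := hσsurj (P.coeff k)
      exact ⟨u, hu⟩
    obtain ⟨P', hP'map, -, hP'm⟩ := Polynomial.lifts_and_degree_eq_and_monic hl hPm
    refine ⟨P', hP'm, ?_⟩
    have hcomp : (algebraMap (Polynomial ℂ) L18)
        = ((algebraMap R18 L18).comp (algebraMap A R18)).comp σ.toRingHom := by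
      apply Polynomial.ringHom_ext
      · intro a
        show algebraMap (Kf18 I g) L18 (φ (Polynomial.C a)) = _
        rw [hφval]
        have h1 : Polynomial.aeval (res18 I g) (Polynomial.C a) = algebraMap ℂ L18 a :=
          Polynomial.aeval_C _ _
        have h2 : (algebraMap A R18) (σ (Polynomial.C a))
            = Polynomial.aeval (Ideal.Quotient.mk I g) (Polynomial.C a) := rfl
        rw [h1]
        show _ = algebraMap R18 L18 ((algebraMap A R18) (σ (Polynomial.C a)))
        rw [h2, Polynomial.aeval_C, ← IsScalarTower.algebraMap_apply]
      · show algebraMap (Kf18 I g) L18 (φ Polynomial.X) = _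
        rw [hφval]
        have h1 : Polynomial.aeval (res18 I g) (Polynomial.X : Polynomial ℂ) = res18 I g :=
          Polynomial.aeval_X _
        have h2 : (algebraMap A R18) (σ Polynomial.X)
            = Polynomial.aeval (Ideal.Quotient.mk I g) (Polynomial.X : Polynomial ℂ) := rfl
        rw [h1]
        show _ = algebraMap R18 L18 ((algebraMap A R18) (σ Polynomial.X))
        rw [h2, Polynomial.aeval_X]
    show Polynomial.eval₂ (algebraMap (Polynomial ℂ) L18) (res18 I p) P' = 0
    have e1 : Polynomial.eval₂ (((algebraMap R18 L18).comp (algebraMap A R18)).comp σ.toRingHom)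
        (res18 I p) P'
        = Polynomial.eval₂ ((algebraMap R18 L18).comp (algebraMap A R18)) (res18 I p)
          (P'.map σ.toRingHom) := (Polynomial.eval₂_map _ _ _).symm
    have e2 := Polynomial.hom_eval₂ P (algebraMap A R18) (algebraMap R18 L18)
      (Ideal.Quotient.mk I p)
    rw [hcomp, e1, hP'map, ← e2, hPe, map_zero]
  have heq := minpoly.isIntegrallyClosed_eq_field_fractions' (Kf18 I g) hintCX
  exact ⟨minpoly (Polynomial ℂ) (res18 I p), minpoly.monic hintCX, heq.symm⟩
lemma res18_add_C_mul (a b : MvPolynomial (Fin n) ℂ) (c : ℂ) :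
    res18 I (a + MvPolynomial.C c * b)
      = res18 I a + algebraMap ℂ L18 c * res18 I b := by
  show algebraMap R18 L18 (Ideal.Quotient.mk I (a + MvPolynomial.C c * b)) = _
  have hC : algebraMap R18 L18 (Ideal.Quotient.mk I (MvPolynomial.C c)) = algebraMap ℂ L18 c := by
    show algebraMap R18 L18 (algebraMap ℂ R18 c) = algebraMap ℂ L18 c
    rw [← IsScalarTower.algebraMap_apply]
  rw [map_add, map_mul, map_add, map_mul, hC]

end Curve18

section Stage18

open Polynomial IntermediateField

variable {n m : ℕ} (I : Fin m → Ideal (MvPolynomial (Fin n) ℂ))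
  (hpr : ∀ i, (I i).IsPrime) (g : MvPolynomial (Fin n) ℂ)

lemma stage1_aux18
    (hFIF : ∀ i, haveI := hpr i; Finite (IntermediateField (Kf18 (I i) g)
      (FractionRing (MvPolynomial (Fin n) ℂ ⧸ I i))))
    (t : List (MvPolynomial (Fin n) ℂ)) :
    ∀ (a : MvPolynomial (Fin n) ℂ),
    (∀ i, haveI := hpr i; IntermediateField.adjoin (Kf18 (I i) g)
      (insert (res18 (I i) a) ((fun x => res18 (I i) x) '' {x | x ∈ t})) = ⊤) →
    ∃ p0, ∀ i, haveI := hpr i;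
      IntermediateField.adjoin (Kf18 (I i) g) {res18 (I i) p0} = ⊤ := by
  induction t with
  | nil =>
    intro a ha
    refine ⟨a, fun i => ?_⟩
    haveI := hpr i
    have h1 := ha i
    simpa using h1
  | cons b t' ih =>
    intro a ha
    -- bad sets
    have hbad : ∀ i, haveI := hpr i; {c : ℂ |
        IntermediateField.adjoin (Kf18 (I i) g)
          (insert (res18 (I i) a + algebraMap ℂ _ c * res18 (I i) b)
            ((fun x => res18 (I i) x) '' {x | x ∈ t'})) ≠ ⊤}.Finite := by
      intro i
      haveI := hpr i
      haveI := hFIF i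
      apply aux_engine18
      have h1 := ha i
      rw [show {x | x ∈ b :: t'} = insert b {x | x ∈ t'} by
        ext y; simp [List.mem_cons], Set.image_insert_eq] at h1
      exact h1
    have hfin : (⋃ i, {c : ℂ | haveI := hpr i;
        IntermediateField.adjoin (Kf18 (I i) g)
          (insert (res18 (I i) a + algebraMap ℂ _ c * res18 (I i) b)
            ((fun x => res18 (I i) x) '' {x | x ∈ t'})) ≠ ⊤}).Finite :=
      Set.finite_iUnion (fun i => hbad i)
    obtain ⟨c, hc⟩ := hfin.infinite_compl.nonempty
    apply ih (a + MvPolynomial.C c * b)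
    intro i
    haveI := hpr i
    have hc0 : ¬ (IntermediateField.adjoin (Kf18 (I i) g)
        (insert (res18 (I i) a + algebraMap ℂ _ c * res18 (I i) b)
          ((fun x => res18 (I i) x) '' {x | x ∈ t'})) ≠ ⊤) := by
      intro hcontra
      exact hc (Set.mem_iUnion.mpr ⟨i, hcontra⟩)
    rw [not_not] at hc0
    rw [res18_add_C_mul]
    exact hc0

lemma stage1_18
    (hFIF : ∀ i, haveI := hpr i; Finite (IntermediateField (Kf18 (I i) g)
      (FractionRing (MvPolynomial (Fin n) ℂ ⧸ I i)))) :
    ∃ p0, ∀ i, haveI := hpr i;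
      IntermediateField.adjoin (Kf18 (I i) g) {res18 (I i) p0} = ⊤ := by
  apply stage1_aux18 I hpr g hFIF (List.ofFn (fun k : Fin n => MvPolynomial.X k)) 0
  intro i
  haveI := hpr i
  have h1 : ((fun x => res18 (I i) x) '' {x | x ∈ List.ofFn (fun k : Fin n => MvPolynomial.X k)})
      = Set.range (fun k : Fin n => res18 (I i) (MvPolynomial.X k)) := by
    ext y
    simp only [Set.mem_image, Set.mem_setOf_eq, List.mem_ofFn, Set.mem_range]
    constructor
    · rintro ⟨x, ⟨k, rfl⟩, rfl⟩; exact ⟨k, rfl⟩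
    · rintro ⟨k, rfl⟩; exact ⟨MvPolynomial.X k, ⟨k, rfl⟩, rfl⟩
  rw [h1]
  have h2 : res18 (I i) 0 = 0 := by
    show algebraMap _ _ (Ideal.Quotient.mk (I i) 0) = 0
    rw [map_zero, map_zero]
  rw [h2]
  rw [eq_top_iff, ← adjoin_res18_X_top (I i) g]
  apply IntermediateField.adjoin.mono
  exact Set.subset_insert _ _

end Stage18

section Incomp18

lemma notle18 {R : Type*} [CommRing R] (I J : Ideal R) (hne : I ≠ J)
    [hprI : I.IsPrime] [hprJ : J.IsPrime]
    (hdimI : ringKrullDim (R ⧸ I) = 1) (hdimJ : ringKrullDim (R ⧸ J) = 1)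
    (hle : I ≤ J) : False := by
  -- get a strict pair in Spec (R ⧸ J)
  have hpair : ∃ P₀ P₁ : PrimeSpectrum (R ⧸ J), P₀ < P₁ := by
    by_contra hno
    push_neg at hno
    have hlen : ∀ p : LTSeries (PrimeSpectrum (R ⧸ J)), p.length = 0 := by
      intro p
      by_contra hp
      exact hno _ _ (p.step ⟨0, Nat.pos_of_ne_zero hp⟩)
    haveI : Nontrivial (R ⧸ J) := Ideal.Quotient.nontrivial_iff.mpr hprJ.ne_top
    haveI : Nonempty (PrimeSpectrum (R ⧸ J)) := inferInstance
    rw [ringKrullDim, Order.krullDim_eq_iSup_length] at hdimJ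
    have h0 : (⨆ p : LTSeries (PrimeSpectrum (R ⧸ J)), (p.length : ℕ∞)) = 0 := by
      apply le_antisymm _ (zero_le)
      apply iSup_le
      intro p
      rw [hlen p]
      exact le_refl _
    rw [h0] at hdimJ
    norm_num at hdimJ
  obtain ⟨P₀, P₁, hP⟩ := hpair
  -- pull back to R
  set mkJ := Ideal.Quotient.mk J
  have hsurjJ : Function.Surjective mkJ := Ideal.Quotient.mk_surjective
  set Q₀ : Ideal R := P₀.asIdeal.comap mkJ with hQ₀
  set Q₁ : Ideal R := P₁.asIdeal.comap mkJ with hQ₁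
  haveI : Q₀.IsPrime := Ideal.IsPrime.comap _
  haveI : Q₁.IsPrime := Ideal.IsPrime.comap _
  have hJQ₀ : J ≤ Q₀ := by
    intro x hx
    show mkJ x ∈ P₀.asIdeal
    rw [show mkJ x = 0 from Ideal.Quotient.eq_zero_iff_mem.mpr hx]
    exact zero_mem _
  have hQlt : Q₀ < Q₁ := by
    constructor
    · exact Ideal.comap_mono (show P₀.asIdeal ≤ P₁.asIdeal from le_of_lt hP)
    · intro hge
      have : P₁.asIdeal ≤ P₀.asIdeal := by
        have h1 : Ideal.map mkJ Q₁ ≤ Ideal.map mkJ Q₀ := Ideal.map_mono hge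
        rwa [hQ₀, hQ₁, Ideal.map_comap_of_surjective _ hsurjJ,
          Ideal.map_comap_of_surjective _ hsurjJ] at h1
      exact hP.ne (PrimeSpectrum.ext (le_antisymm
        (show P₀.asIdeal ≤ P₁.asIdeal from le_of_lt hP) this))
  -- push to R ⧸ I
  set mkI := Ideal.Quotient.mk I
  have hsurjI : Function.Surjective mkI := Ideal.Quotient.mk_surjective
  have hIQ₀ : I ≤ Q₀ := le_trans hle hJQ₀
  have hIQ₁ : I ≤ Q₁ := le_trans hIQ₀ (le_of_lt hQlt)
  haveI hq₁pr : (Ideal.map mkI Q₀).IsPrime := Ideal.map_isPrime_of_surjective hsurjI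
    (by rwa [Ideal.mk_ker])
  haveI hq₂pr : (Ideal.map mkI Q₁).IsPrime := Ideal.map_isPrime_of_surjective hsurjI
    (by rwa [Ideal.mk_ker])
  haveI : IsDomain (R ⧸ I) := Ideal.Quotient.isDomain I
  have hcm : ∀ Q : Ideal R, I ≤ Q → (Ideal.map mkI Q).comap mkI = Q := by
    intro Q hQ
    rw [Ideal.comap_map_of_surjective _ hsurjI, ← RingHom.ker_eq_comap_bot, Ideal.mk_ker,
      sup_eq_left.mpr hQ]
  have hbotlt : (⊥ : Ideal (R ⧸ I)) < Ideal.map mkI Q₀ := by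
    rw [bot_lt_iff_ne_bot]
    intro h0
    have : Q₀ ≤ I := by
      intro x hx
      have : mkI x ∈ Ideal.map mkI Q₀ := Ideal.mem_map_of_mem _ hx
      rw [h0] at this
      exact (Ideal.Quotient.eq_zero_iff_mem).mp (Submodule.mem_bot _ |>.mp this)
    exact hne (le_antisymm hle (le_trans hJQ₀ this))
  have hmaplt : Ideal.map mkI Q₀ < Ideal.map mkI Q₁ := by
    constructor
    · exact Ideal.map_mono (le_of_lt hQlt)
    · intro hge
      have h1 : Q₁ ≤ Q₀ := by
        have := Ideal.comap_mono (f := mkI) hge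
        rwa [hcm _ hIQ₀, hcm _ hIQ₁] at this
      exact (ne_of_lt hQlt) (le_antisymm (le_of_lt hQlt) h1)
  -- build a length-2 chain in Spec (R ⧸ I)
  let x0 : PrimeSpectrum (R ⧸ I) := ⟨⊥, Ideal.bot_prime⟩
  let x1 : PrimeSpectrum (R ⧸ I) := ⟨Ideal.map mkI Q₀, hq₁pr⟩
  let x2 : PrimeSpectrum (R ⧸ I) := ⟨Ideal.map mkI Q₁, hq₂pr⟩
  let ch : LTSeries (PrimeSpectrum (R ⧸ I)) :=
    ⟨2, ![x0, x1, x2], by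
      intro i
      fin_cases i
      · exact hbotlt
      · exact hmaplt⟩
  have h2 := Order.LTSeries.length_le_krullDim ch
  rw [show ch.length = 2 from rfl, ← ringKrullDim, hdimI] at h2
  norm_num at h2

lemma exists_h18 {n m : ℕ} (I : Fin m → Ideal (MvPolynomial (Fin n) ℂ))
    (hpr : ∀ i, (I i).IsPrime)
    (hnotle : ∀ i j : Fin m, i ≠ j → ¬ (I j ≤ I i)) :
    ∃ h : Fin m → MvPolynomial (Fin n) ℂ,
      (∀ i, h i ∉ I i) ∧ (∀ i j, i ≠ j → h i ∈ I j) := by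
  have hchoice : ∀ i j : Fin m, i ≠ j → ∃ e, e ∈ I j ∧ e ∉ I i := by
    intro i j hij
    have := hnotle i j hij
    rw [SetLike.not_le_iff_exists] at this
    obtain ⟨e, he1, he2⟩ := this
    exact ⟨e, he1, he2⟩
  classical
  set E : Fin m → Fin m → MvPolynomial (Fin n) ℂ :=
    fun i j => if h : i ≠ j then (hchoice i j h).choose else 1 with hE
  have hE1 : ∀ i j (h : i ≠ j), E i j ∈ I j := by
    intro i j h
    rw [hE]; simp only [dif_pos h]
    exact (hchoice i j h).choose_spec.1
  have hE2 : ∀ i j (h : i ≠ j), E i j ∉ I i := by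
    intro i j h
    rw [hE]; simp only [dif_pos h]
    exact (hchoice i j h).choose_spec.2
  refine ⟨fun i => ∏ j ∈ Finset.univ.erase i, E i j, fun i => ?_, fun i j hij => ?_⟩
  · intro hmem
    haveI := hpr i
    obtain ⟨j, hjmem, hj⟩ := (Ideal.IsPrime.prod_mem_iff).mp
      (show ∏ k ∈ Finset.univ.erase i, E i k ∈ I i from hmem)
    exact hE2 i j (Ne.symm (Finset.mem_erase.mp hjmem).1) hj
  · have hjmem : j ∈ Finset.univ.erase i := Finset.mem_erase.mpr ⟨Ne.symm hij, Finset.mem_univ _⟩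
    show ∏ k ∈ Finset.univ.erase i, E i k ∈ I j
    rw [← Finset.prod_erase_mul _ _ hjmem]
    exact Ideal.mul_mem_left _ _ (hE1 i j hij)

end Incomp18

noncomputable section Stage2_18
open Polynomial IntermediateField

set_option maxHeartbeats 8000000 in
lemma stage2_18 {n m : ℕ} (I : Fin m → Ideal (MvPolynomial (Fin n) ℂ))
    (hpr : ∀ i, (I i).IsPrime) (g : MvPolynomial (Fin n) ℂ)
    (hnc : ∀ i, Ideal.Quotient.mk (I i) g ∉
      Set.range (algebraMap ℂ (MvPolynomial (Fin n) ℂ ⧸ I i)))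
    (hMF : ∀ i, Module.Finite
      (Algebra.adjoin ℂ ({Ideal.Quotient.mk (I i) g} : Set (MvPolynomial (Fin n) ℂ ⧸ I i)))
      (MvPolynomial (Fin n) ℂ ⧸ I i))
    (p0 : MvPolynomial (Fin n) ℂ)
    (hprim : ∀ i, haveI := hpr i;
      IntermediateField.adjoin (Kf18 (I i) g) {res18 (I i) p0} = ⊤)
    (h : Fin m → MvPolynomial (Fin n) ℂ)
    (hh1 : ∀ i, h i ∉ I i) (hh2 : ∀ i j, i ≠ j → h i ∈ I j) :
    ∃ (p : MvPolynomial (Fin n) ℂ) (q : Fin m → Polynomial (Polynomial ℂ)),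
      Function.Injective q ∧
      ∀ i, haveI := hpr i;
        (q i).Monic ∧
        IntermediateField.adjoin (Kf18 (I i) g) {res18 (I i) p} = ⊤ ∧
        Polynomial.map (Polynomial.aeval (R := ℂ) (⟨res18 (I i) g,
          IntermediateField.subset_adjoin ℂ _ (Set.mem_singleton _)⟩ : Kf18 (I i) g)).toRingHom
          (q i) = minpoly (Kf18 (I i) g) (res18 (I i) p) := by
  classical
  set Q : Fin m → ℂ → Polynomial (Polynomial ℂ) := fun i x =>
    (@exists_q18 n (I i) (hpr i) g (hnc i) (hMF i) (p0 + MvPolynomial.C x * h i)).choose with hQ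
  have hQm : ∀ i x, (Q i x).Monic := fun i x =>
    (@exists_q18 n (I i) (hpr i) g (hnc i) (hMF i) (p0 + MvPolynomial.C x * h i)).choose_spec.1
  have hQmap : ∀ i x, haveI := hpr i;
      Polynomial.map (Polynomial.aeval (R := ℂ) (⟨res18 (I i) g,
        IntermediateField.subset_adjoin ℂ _ (Set.mem_singleton _)⟩ : Kf18 (I i) g)).toRingHom
        (Q i x) = minpoly (Kf18 (I i) g) (res18 (I i) (p0 + MvPolynomial.C x * h i)) :=
    fun i x =>
    (@exists_q18 n (I i) (hpr i) g (hnc i) (hMF i) (p0 + MvPolynomial.C x * h i)).choose_spec.2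
  -- the bad sets for primitivity
  have hB1 : ∀ i : Fin m, haveI := hpr i;
      {x : ℂ | IntermediateField.adjoin (Kf18 (I i) g)
        (insert (res18 (I i) p0
          + algebraMap ℂ (FractionRing (MvPolynomial (Fin n) ℂ ⧸ I i)) x * res18 (I i) (h i))
          (∅ : Set (FractionRing (MvPolynomial (Fin n) ℂ ⧸ I i)))) ≠ ⊤}.Finite := by
    intro i
    haveI := hpr i
    haveI := finite_intermediateField_Kf18 (I i) g (hMF i)
    apply aux_engine18
    rw [eq_top_iff, ← hprim i]
    apply IntermediateField.adjoin.mono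
    intro y hy
    rw [Set.mem_singleton_iff] at hy
    rw [hy]
    exact Set.mem_insert _ _
  have hβ : ∀ i, res18 (I i) (h i) ≠ 0 := by
    intro i h0
    haveI := hpr i
    have h1 : Ideal.Quotient.mk (I i) (h i) = 0 :=
      IsFractionRing.injective (MvPolynomial (Fin n) ℂ ⧸ I i)
        (FractionRing (MvPolynomial (Fin n) ℂ ⧸ I i)) (by rw [map_zero]; exact h0)
    exact hh1 i (Ideal.Quotient.eq_zero_iff_mem.mp h1)
  -- root argument
  have hroot : ∀ (i : Fin m) (x : ℂ) (D : Polynomial (Polynomial ℂ)), Q i x = D →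
      haveI := hpr i;
      Polynomial.eval (res18 (I i) p0
          + algebraMap ℂ (FractionRing (MvPolynomial (Fin n) ℂ ⧸ I i)) x * res18 (I i) (h i))
        (D.map ((algebraMap (Kf18 (I i) g) (FractionRing (MvPolynomial (Fin n) ℂ ⧸ I i))).comp
          (Polynomial.aeval (R := ℂ) (⟨res18 (I i) g,
            IntermediateField.subset_adjoin ℂ _ (Set.mem_singleton _)⟩ : Kf18 (I i) g)).toRingHom))
        = 0 := by
    intro i x D hQD
    haveI := hpr i
    have h1 := minpoly.aeval (Kf18 (I i) g) (res18 (I i) (p0 + MvPolynomial.C x * h i))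
    rw [← hQmap i x, hQD] at h1
    rw [Polynomial.aeval_def] at h1
    rw [Polynomial.eval₂_map] at h1
    rw [← Polynomial.eval_map] at h1
    rw [← res18_add_C_mul]
    exact h1
  have hB2 : ∀ (i : Fin m) (D : Polynomial (Polynomial ℂ)), D.Monic →
      {x : ℂ | Q i x = D}.Finite := by
    intro i D hD
    haveI := hpr i
    apply Set.Finite.subset (aux_roots18 (res18 (I i) p0) (res18 (I i) (h i)) (hβ i)
      (D.map ((algebraMap (Kf18 (I i) g) (FractionRing (MvPolynomial (Fin n) ℂ ⧸ I i))).comp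
        (Polynomial.aeval (R := ℂ) (⟨res18 (I i) g,
          IntermediateField.subset_adjoin ℂ _ (Set.mem_singleton _)⟩ : Kf18 (I i) g)).toRingHom))
      ((hD.map _).ne_zero))
    intro x hx
    exact hroot i x D hx
  -- recursive choice of the constants
  have main : ∀ k : ℕ, ∃ c : Fin m → ℂ, ∀ i : Fin m, (i : ℕ) < k →
      (haveI := hpr i; IntermediateField.adjoin (Kf18 (I i) g)
        (insert (res18 (I i) p0
          + algebraMap ℂ (FractionRing (MvPolynomial (Fin n) ℂ ⧸ I i)) (c i) * res18 (I i) (h i))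
          (∅ : Set (FractionRing (MvPolynomial (Fin n) ℂ ⧸ I i)))) = ⊤) ∧
      (∀ j : Fin m, (j : ℕ) < (i : ℕ) → Q i (c i) ≠ Q j (c j)) := by
    intro k
    induction k with
    | zero => exact ⟨fun _ => 0, fun i hi => absurd hi (by omega)⟩
    | succ k ihk =>
      obtain ⟨c, hc⟩ := ihk
      by_cases hk : k < m
      · set i₀ : Fin m := ⟨k, hk⟩ with hi₀
        have hi₀v : (i₀ : ℕ) = k := rfl
        have hbadfin : ({x : ℂ | haveI := hpr i₀; IntermediateField.adjoin (Kf18 (I i₀) g)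
            (insert (res18 (I i₀) p0
              + algebraMap ℂ (FractionRing (MvPolynomial (Fin n) ℂ ⧸ I i₀)) x * res18 (I i₀) (h i₀))
              (∅ : Set (FractionRing (MvPolynomial (Fin n) ℂ ⧸ I i₀)))) ≠ ⊤}
            ∪ ⋃ j ∈ {j : Fin m | (j : ℕ) < k}, {x : ℂ | Q i₀ x = Q j (c j)}).Finite := by
        
          apply Set.Finite.union (hB1 i₀)
          apply Set.Finite.biUnion (Set.toFinite _)
          intro j _
          exact hB2 i₀ (Q j (c j)) (hQm j (c j))
        obtain ⟨x, hx⟩ := hbadfin.infinite_compl.nonempty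
        rw [Set.mem_compl_iff, Set.mem_union, not_or] at hx
        obtain ⟨hx1, hx2⟩ := hx
        refine ⟨Function.update c i₀ x, fun i hik => ?_⟩
        rcases Nat.lt_or_ge (i : ℕ) k with hlt | hge
        · have hne : i ≠ i₀ := Fin.ne_of_val_ne (by omega)
          rw [Function.update_of_ne hne]
          obtain ⟨hg1, hg2⟩ := hc i hlt
          refine ⟨hg1, fun j hj => ?_⟩
          have hjne : j ≠ i₀ := Fin.ne_of_val_ne (by omega)
          rw [Function.update_of_ne hjne]
          exact hg2 j hj
        · have hieq : i = i₀ := Fin.ext (by omega)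
          rw [hieq, Function.update_self]
          constructor
          · simp only [Set.mem_setOf_eq, not_not] at hx1
            exact hx1
          · intro j hj
            have hjk : (j : ℕ) < k := by omega
            have hjne : j ≠ i₀ := Fin.ne_of_val_ne (by omega)
            rw [Function.update_of_ne hjne]
            intro hcontra
            exact hx2 (Set.mem_biUnion hjk hcontra)
      · refine ⟨c, fun i hik => hc i ?_⟩
        have := i.isLt
        omega
  obtain ⟨c, hgood⟩ := main m
  have hgood' := fun i : Fin m => hgood i i.isLt
  set p := p0 + ∑ j, MvPolynomial.C (c j) * h j with hpdef
  have hresp : ∀ i, Ideal.Quotient.mk (I i) p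
      = Ideal.Quotient.mk (I i) (p0 + MvPolynomial.C (c i) * h i) := by
    intro i
    rw [hpdef, map_add, map_add, map_sum]
    congr 1
    rw [Finset.sum_eq_single i
      (fun j _ hji => by
        rw [Ideal.Quotient.eq_zero_iff_mem]
        exact Ideal.mul_mem_left _ _ (hh2 j i hji))
      (fun hni => absurd (Finset.mem_univ i) hni)]
  have hrespL : ∀ i, res18 (I i) p = res18 (I i) (p0 + MvPolynomial.C (c i) * h i) := by
    intro i
    show algebraMap _ _ _ = algebraMap _ _ _
    rw [hresp i]
  refine ⟨p, fun i => Q i (c i), ?_, fun i => ?_⟩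
  · intro i j hqe
    by_contra hne
    rcases Nat.lt_or_gt_of_ne (fun hv => hne (Fin.ext hv)) with hlt | hgt
    · exact ((hgood' j).2 i hlt) hqe.symm
    · exact ((hgood' i).2 j hgt) hqe
  · haveI := hpr i
    refine ⟨hQm i (c i), ?_, ?_⟩
    · rw [hrespL i, res18_add_C_mul, Set.singleton_def]
      exact (hgood' i).1
    · rw [hrespL i]
      exact hQmap i (c i)

end Stage2_18

noncomputable section Deg18
open Polynomial IntermediateField

variable {n : ℕ} (I : Ideal (MvPolynomial (Fin n) ℂ)) [I.IsPrime] (g : MvPolynomial (Fin n) ℂ)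

lemma minpoly_natDegree18
    (hMF : Module.Finite
      (Algebra.adjoin ℂ ({Ideal.Quotient.mk I g} : Set (MvPolynomial (Fin n) ℂ ⧸ I)))
      (MvPolynomial (Fin n) ℂ ⧸ I))
    (p : MvPolynomial (Fin n) ℂ)
    (hprim : IntermediateField.adjoin (Kf18 I g) {res18 I p} = ⊤) :
    (minpoly (Kf18 I g) (res18 I p)).natDegree
      = Module.finrank (Kf18 I g) (FractionRing (MvPolynomial (Fin n) ℂ ⧸ I)) := by
  haveI := finiteDimensional_Kf18 I g hMF
  have hint := isIntegral_Kf18_res I g hMF (Ideal.Quotient.mk I p)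
  have h1 := IntermediateField.adjoin.finrank hint
  rw [hprim] at h1
  rw [← h1, IntermediateField.finrank_top']

end Deg18

/-- Let `X₁, …, X_m` be distinct irreducible affine curves in ℂⁿ, each
equipped with a finite dominant regular function `fᵢ` to ℂ induced by a common
polynomial `g`, of degree `dᵢ = [ℂ(Xᵢ) : ℂ(fᵢ)]`.  Then there exists a polynomial
`p ∈ ℂ[z₁,…,z_n]` such that for each `i`, the restriction `pᵢ` of `p` to `Xᵢ` is a
primitive element of `ℂ(Xᵢ)` over `ℂ(fᵢ)`, its minimal polynomial is monic of degree
`dᵢ` with coefficients in `ℂ[fᵢ]`, and the corresponding normalized irreducible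
polynomials `qᵢ(s,t) ∈ ℂ[s][t]` (monic of degree `dᵢ` in `t`, with
`qᵢ(fᵢ, t)` the minimal polynomial of `pᵢ`) are pairwise distinct. -/
theorem stmt_18 (n m : ℕ) (X : Fin m → Set (Fin n → ℂ))
    (hcl : ∀ i, zeroLocus ℂ (vanishingIdeal ℂ (X i)) = X i)
    (hprime : ∀ i, (vanishingIdeal ℂ (X i)).IsPrime)
    (hdist : Function.Injective X)
    (hcurve : ∀ i, ringKrullDim (MvPolynomial (Fin n) ℂ ⧸ vanishingIdeal ℂ (X i)) = 1)
    (g : MvPolynomial (Fin n) ℂ)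
    (hnc : ∀ i, (Ideal.Quotient.mk (vanishingIdeal ℂ (X i)) g) ∉
        Set.range (algebraMap ℂ (MvPolynomial (Fin n) ℂ ⧸ vanishingIdeal ℂ (X i))))
    (hfin : ∀ i, Module.Finite
        (Algebra.adjoin ℂ (({Ideal.Quotient.mk (vanishingIdeal ℂ (X i)) g}) : Set (MvPolynomial (Fin n) ℂ ⧸ vanishingIdeal ℂ (X i))))
        (MvPolynomial (Fin n) ℂ ⧸ vanishingIdeal ℂ (X i)))
    (d : Fin m → ℕ)
    (hd : ∀ i, haveI := hprime i;
      d i = Module.finrank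
        (IntermediateField.adjoin ℂ
        (({algebraMap (MvPolynomial (Fin n) ℂ ⧸ vanishingIdeal ℂ (X i))
          (FractionRing (MvPolynomial (Fin n) ℂ ⧸ vanishingIdeal ℂ (X i))) (Ideal.Quotient.mk (vanishingIdeal ℂ (X i)) g)}) : Set (FractionRing (MvPolynomial (Fin n) ℂ ⧸ vanishingIdeal ℂ (X i)))))
        (FractionRing (MvPolynomial (Fin n) ℂ ⧸ vanishingIdeal ℂ (X i)))) :
    ∃ (p : MvPolynomial (Fin n) ℂ) (q : Fin m → Polynomial (Polynomial ℂ)),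
      Function.Injective q ∧
      ∀ i, haveI := hprime i;
        (IntermediateField.adjoin
            (IntermediateField.adjoin ℂ
        (({algebraMap (MvPolynomial (Fin n) ℂ ⧸ vanishingIdeal ℂ (X i))
          (FractionRing (MvPolynomial (Fin n) ℂ ⧸ vanishingIdeal ℂ (X i))) (Ideal.Quotient.mk (vanishingIdeal ℂ (X i)) g)}) : Set (FractionRing (MvPolynomial (Fin n) ℂ ⧸ vanishingIdeal ℂ (X i)))))
            (({algebraMap (MvPolynomial (Fin n) ℂ ⧸ vanishingIdeal ℂ (X i))
          (FractionRing (MvPolynomial (Fin n) ℂ ⧸ vanishingIdeal ℂ (X i))) (Ideal.Quotient.mk (vanishingIdeal ℂ (X i)) p)}) : Set (FractionRing (MvPolynomial (Fin n) ℂ ⧸ vanishingIdeal ℂ (X i)))) = ⊤) ∧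
        (minpoly (IntermediateField.adjoin ℂ
        (({algebraMap (MvPolynomial (Fin n) ℂ ⧸ vanishingIdeal ℂ (X i))
          (FractionRing (MvPolynomial (Fin n) ℂ ⧸ vanishingIdeal ℂ (X i))) (Ideal.Quotient.mk (vanishingIdeal ℂ (X i)) g)}) : Set (FractionRing (MvPolynomial (Fin n) ℂ ⧸ vanishingIdeal ℂ (X i))))) (algebraMap (MvPolynomial (Fin n) ℂ ⧸ vanishingIdeal ℂ (X i))
          (FractionRing (MvPolynomial (Fin n) ℂ ⧸ vanishingIdeal ℂ (X i))) (Ideal.Quotient.mk (vanishingIdeal ℂ (X i)) p))).Monic ∧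
        (minpoly (IntermediateField.adjoin ℂ
        (({algebraMap (MvPolynomial (Fin n) ℂ ⧸ vanishingIdeal ℂ (X i))
          (FractionRing (MvPolynomial (Fin n) ℂ ⧸ vanishingIdeal ℂ (X i))) (Ideal.Quotient.mk (vanishingIdeal ℂ (X i)) g)}) : Set (FractionRing (MvPolynomial (Fin n) ℂ ⧸ vanishingIdeal ℂ (X i))))) (algebraMap (MvPolynomial (Fin n) ℂ ⧸ vanishingIdeal ℂ (X i))
          (FractionRing (MvPolynomial (Fin n) ℂ ⧸ vanishingIdeal ℂ (X i))) (Ideal.Quotient.mk (vanishingIdeal ℂ (X i)) p))).natDegree = d i ∧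
        (∀ j : ℕ,
          (((minpoly (IntermediateField.adjoin ℂ
        (({algebraMap (MvPolynomial (Fin n) ℂ ⧸ vanishingIdeal ℂ (X i))
          (FractionRing (MvPolynomial (Fin n) ℂ ⧸ vanishingIdeal ℂ (X i))) (Ideal.Quotient.mk (vanishingIdeal ℂ (X i)) g)}) : Set (FractionRing (MvPolynomial (Fin n) ℂ ⧸ vanishingIdeal ℂ (X i))))) (algebraMap (MvPolynomial (Fin n) ℂ ⧸ vanishingIdeal ℂ (X i))
          (FractionRing (MvPolynomial (Fin n) ℂ ⧸ vanishingIdeal ℂ (X i))) (Ideal.Quotient.mk (vanishingIdeal ℂ (X i)) p))).coeff j) : FractionRing (MvPolynomial (Fin n) ℂ ⧸ vanishingIdeal ℂ (X i))) ∈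
            Algebra.adjoin ℂ (({algebraMap (MvPolynomial (Fin n) ℂ ⧸ vanishingIdeal ℂ (X i))
          (FractionRing (MvPolynomial (Fin n) ℂ ⧸ vanishingIdeal ℂ (X i))) (Ideal.Quotient.mk (vanishingIdeal ℂ (X i)) g)}) : Set (FractionRing (MvPolynomial (Fin n) ℂ ⧸ vanishingIdeal ℂ (X i))))) ∧
        (q i).Monic ∧ Irreducible (q i) ∧ (q i).natDegree = d i ∧
        Polynomial.map
          (Polynomial.aeval
            (⟨algebraMap (MvPolynomial (Fin n) ℂ ⧸ vanishingIdeal ℂ (X i))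
          (FractionRing (MvPolynomial (Fin n) ℂ ⧸ vanishingIdeal ℂ (X i))) (Ideal.Quotient.mk (vanishingIdeal ℂ (X i)) g),
          IntermediateField.subset_adjoin ℂ _ (Set.mem_singleton _)⟩ :
          IntermediateField.adjoin ℂ
        (({algebraMap (MvPolynomial (Fin n) ℂ ⧸ vanishingIdeal ℂ (X i))
          (FractionRing (MvPolynomial (Fin n) ℂ ⧸ vanishingIdeal ℂ (X i))) (Ideal.Quotient.mk (vanishingIdeal ℂ (X i)) g)}) : Set (FractionRing (MvPolynomial (Fin n) ℂ ⧸ vanishingIdeal ℂ (X i)))))).toRingHom (q i) =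
          minpoly (IntermediateField.adjoin ℂ
        (({algebraMap (MvPolynomial (Fin n) ℂ ⧸ vanishingIdeal ℂ (X i))
          (FractionRing (MvPolynomial (Fin n) ℂ ⧸ vanishingIdeal ℂ (X i))) (Ideal.Quotient.mk (vanishingIdeal ℂ (X i)) g)}) : Set (FractionRing (MvPolynomial (Fin n) ℂ ⧸ vanishingIdeal ℂ (X i))))) (algebraMap (MvPolynomial (Fin n) ℂ ⧸ vanishingIdeal ℂ (X i))
          (FractionRing (MvPolynomial (Fin n) ℂ ⧸ vanishingIdeal ℂ (X i))) (Ideal.Quotient.mk (vanishingIdeal ℂ (X i)) p)) := by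
  
  classical
  set I : Fin m → Ideal (MvPolynomial (Fin n) ℂ) := fun i => vanishingIdeal ℂ (X i) with hIdef
  have hpr : ∀ i, (I i).IsPrime := hprime
  have hIdist : ∀ i j : Fin m, i ≠ j → I i ≠ I j := by
    intro i j hij hIeq
    exact hij (hdist (by rw [← hcl i, ← hcl j]; exact congrArg (zeroLocus ℂ) hIeq))
  have hnotle : ∀ i j : Fin m, i ≠ j → ¬ (I j ≤ I i) := by
    intro i j hij hle
    haveI := hpr i
    haveI := hpr j
    exact notle18 (I j) (I i) (hIdist j i (Ne.symm hij)) (hcurve j) (hcurve i) hle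
  obtain ⟨h, hh1, hh2⟩ := exists_h18 I hpr hnotle
  have hFIF : ∀ i, haveI := hpr i; Finite (IntermediateField (Kf18 (I i) g)
      (FractionRing (MvPolynomial (Fin n) ℂ ⧸ I i))) := by
    intro i
    haveI := hpr i
    exact finite_intermediateField_Kf18 (I i) g (hfin i)
  obtain ⟨p0, hp0⟩ := stage1_18 I hpr g hFIF
  obtain ⟨p, q, hqinj, hq⟩ := stage2_18 I hpr g hnc hfin p0 hp0 h hh1 hh2
  refine ⟨p, q, hqinj, fun i => ?_⟩
  haveI := hpr i
  haveI := finiteDimensional_Kf18 (I i) g (hfin i)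
  obtain ⟨hqm, hprim, hqmap⟩ := hq i
  have hint : IsIntegral (Kf18 (I i) g) (res18 (I i) p) :=
    isIntegral_Kf18_res (I i) g (hfin i) _
  have hmd : (minpoly (Kf18 (I i) g) (res18 (I i) p)).natDegree = d i := by
    rw [minpoly_natDegree18 (I i) g (hfin i) p hprim]
    exact (hd i).symm
  refine ⟨hprim, minpoly.monic hint, hmd, ?_, hqm, ?_, ?_, hqmap⟩
  · intro j
    rw [← hqmap, Polynomial.coeff_map]
    have h2 := phi18_val (I i) g ((q i).coeff j)
    rw [show (((Polynomial.aeval (R := ℂ) (⟨res18 (I i) g,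
        IntermediateField.subset_adjoin ℂ _ (Set.mem_singleton _)⟩ : Kf18 (I i) g)).toRingHom
        ((q i).coeff j) : Kf18 (I i) g) : FractionRing (MvPolynomial (Fin n) ℂ ⧸ I i))
      = algebraMap (Kf18 (I i) g) (FractionRing (MvPolynomial (Fin n) ℂ ⧸ I i))
        ((Polynomial.aeval (R := ℂ) (⟨res18 (I i) g,
        IntermediateField.subset_adjoin ℂ _ (Set.mem_singleton _)⟩ : Kf18 (I i) g)).toRingHom
        ((q i).coeff j)) from rfl, h2]
    rw [Algebra.adjoin_singleton_eq_range_aeval]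
    exact Set.mem_range_self _
  · have hirr : Irreducible (minpoly (Kf18 (I i) g) (res18 (I i) p)) :=
      minpoly.irreducible hint
    rw [← hqmap] at hirr
    exact Polynomial.Monic.irreducible_of_irreducible_map _ _ hqm hirr
  · have h3 := hqm.natDegree_map ((Polynomial.aeval (R := ℂ) (⟨res18 (I i) g,
      IntermediateField.subset_adjoin ℂ _ (Set.mem_singleton _)⟩ : Kf18 (I i) g)).toRingHom)
    rw [hqmap] at h3
    rw [← h3]
    exact hmd

-- #print axioms stmt_18
end
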